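/- arXiv:1904.03126 — 6 statements merged into one kernel-verified Lean document; each statement's English description precedes it below -/
import Mathlib

section
/- Let k be a nonarchimedean normed field and let p be a prime number with ‖(p : k)‖ = 1/p. If ξ and ξ' are two distinct p-th roots of unity in k (i.e. ξ^p = 1, ξ'^p = 1 and ξ ≠ ξ'), then ‖ξ − ξ'‖ = p^(−1/(p−1)). -/
/-- **Distance between distinct p-th roots of unity.**
Let `k` be a nonarchimedean normed field and `p` a prime with `‖(p : k)‖ = 1/p`.
If `ξ` and `ξ'` are two distinct `p`-th roots of unity in `k`, then
`‖ξ - ξ'‖ = p ^ (-1/(p-1))`. -/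
theorem dist_of_distinct_pth_roots_of_unity
    {k : Type*} [NormedField k]
    (hna : ∀ x y : k, ‖x + y‖ ≤ max ‖x‖ ‖y‖)
    (p : ℕ) (hp : p.Prime) (hpnorm : ‖(p : k)‖ = 1 / p)
    (ξ ξ' : k) (hξ : ξ ^ p = 1) (hξ' : ξ' ^ p = 1) (hne : ξ ≠ ξ') :
    ‖ξ - ξ'‖ = (p : ℝ) ^ (-(1 : ℝ) / ((p : ℝ) - 1)) := by
  have hud : IsUltrametricDist k :=
    IsUltrametricDist.isUltrametricDist_of_forall_norm_add_le_max_norm hna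
  have hp2 : 2 ≤ p := hp.two_le
  have hpR : (1 : ℝ) < (p : ℝ) := by exact_mod_cast hp.one_lt
  have hpRpos : (0 : ℝ) < (p : ℝ) := by linarith
  have hppos : (0:ℝ) < 1 / p := by positivity
  -- norms of roots of unity are 1
  have norm_one_of_pow : ∀ x : k, x ^ p = 1 → ‖x‖ = 1 := by
    intro x hx
    have h1 : ‖x‖ ^ p = 1 := by rw [← norm_pow, hx, norm_one]
    rcases lt_trichotomy ‖x‖ 1 with h | h | h
    · have := pow_lt_one₀ (norm_nonneg x) h hp.ne_zero
      linarith
    · exact h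
    · have := one_lt_pow₀ h hp.ne_zero
      linarith
  have hnξ : ‖ξ‖ = 1 := norm_one_of_pow ξ hξ
  have hnξ' : ‖ξ'‖ = 1 := norm_one_of_pow ξ' hξ'
  set u : k := ξ - ξ' with hu
  have hune : u ≠ 0 := sub_ne_zero_of_ne hne
  set r : ℝ := ‖u‖ with hr
  have hrpos : 0 < r := norm_pos_iff.mpr hune
  have hrle1 : r ≤ 1 := by
    have := hna ξ (-ξ')
    simp only [norm_neg, hnξ, hnξ', max_self] at this
    simpa [hr, hu, sub_eq_add_neg] using this
  -- integer norms ≤ 1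
  have hint : ∀ n : ℕ, ‖(n : k)‖ ≤ 1 := fun n => IsUltrametricDist.norm_natCast_le_one k n
  -- key sum identity
  set f : ℕ → k := fun i => ξ' ^ i * u ^ (p - 1 - i) * (Nat.choose p i : k) with hf
  have hS : ∑ i ∈ Finset.range p, f i = 0 := by
    have hexp : (ξ' + u) ^ p = ∑ i ∈ Finset.range (p + 1),
        ξ' ^ i * u ^ (p - i) * (Nat.choose p i : k) := add_pow ξ' u p
    have hξu : ξ' + u = ξ := by rw [hu]; ring
    rw [hξu, Finset.sum_range_succ] at hexp
    simp only [Nat.sub_self, pow_zero, Nat.choose_self, Nat.cast_one, mul_one, hξ, hξ'] at hexp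
    have h0 : ∑ i ∈ Finset.range p, ξ' ^ i * u ^ (p - i) * (Nat.choose p i : k) = 0 := by
      linear_combination -hexp
    have hfac : ∑ i ∈ Finset.range p, ξ' ^ i * u ^ (p - i) * (Nat.choose p i : k)
        = u * ∑ i ∈ Finset.range p, f i := by
      rw [Finset.mul_sum]
      refine Finset.sum_congr rfl fun i hi => ?_
      have hip : i < p := Finset.mem_range.mp hi
      have hpi : p - i = (p - 1 - i) + 1 := by omega
      rw [hf, hpi, pow_succ]
      ring
    rw [hfac] at h0
    exact (mul_eq_zero.mp h0).resolve_left hune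
  -- norm bounds on terms
  have hnorm_f : ∀ i, ‖f i‖ ≤ r ^ (p - 1 - i) := by
    intro i
    rw [hf]
    simp only [norm_mul, norm_pow, hnξ', one_pow, one_mul]
    calc r ^ (p-1-i) * ‖(Nat.choose p i : k)‖ ≤ r ^ (p-1-i) * 1 :=
          mul_le_mul_of_nonneg_left (hint _) (by positivity)
      _ = r ^ (p-1-i) := mul_one _
  have hnorm_f_mid : ∀ i, 0 < i → i < p → ‖f i‖ ≤ (1/p) * r ^ (p - 1 - i) := by
    intro i hi0 hip
    obtain ⟨m, hm⟩ := hp.dvd_choose_self (by omega) hip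
    rw [hf]
    simp only [norm_mul, norm_pow, hnξ', one_pow, one_mul, hm]
    push_cast
    rw [norm_mul, hpnorm]
    calc r ^ (p-1-i) * (1/(p:ℝ) * ‖(m : k)‖) ≤ r ^ (p-1-i) * (1/p * 1) := by
          refine mul_le_mul_of_nonneg_left ?_ (by positivity)
          exact mul_le_mul_of_nonneg_left (hint m) (by positivity)
      _ = 1/p * r ^ (p-1-i) := by ring
  have hnorm_f0 : ‖f 0‖ = r ^ (p - 1) := by
    rw [hf]; simp [norm_pow]; rfl
  have hnorm_fp : ‖f (p - 1)‖ = 1 / p := by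
    rw [hf]
    have h1 : p - 1 - (p - 1) = 0 := by omega
    have h2 : Nat.choose p (p - 1) = p := by
      rw [Nat.choose_symm (k := 1) (by omega), Nat.choose_one_right]
    simp only []
    rw [h1, h2]
    simp [norm_mul, norm_pow, hnξ', hpnorm]
  -- main dichotomy: show r ^ (p-1) = 1/p
  have key : r ^ (p - 1) = 1 / p := by
    rcases lt_trichotomy (r ^ (p - 1)) (1/p) with h | h | h
    · -- f (p-1) dominates: contradiction
      exfalso
      have hr1 : r < 1 := by
        by_contra hc
        push_neg at hc
        have h1 : (1:ℝ) ≤ r ^ (p-1) := one_le_pow₀ hc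
        have h2 : (1:ℝ)/p < 1 := by
          rw [div_lt_one hpRpos]; exact hpR
        linarith
      have hsplit : f (p-1) = - ∑ i ∈ Finset.range (p-1), f i := by
        have hh : ∑ i ∈ Finset.range (p-1), f i + f (p-1) = 0 := by
          rw [← Finset.sum_range_succ, show p - 1 + 1 = p by omega]; exact hS
        exact eq_neg_of_add_eq_zero_right hh
      set C : ℝ := max (r ^ (p-1)) ((1/p) * r) with hC
      have hCle : ∀ i ∈ Finset.range (p-1), ‖f i‖ ≤ C := by
        intro i hi
        have hip : i < p - 1 := Finset.mem_range.mp hi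
        rcases Nat.eq_zero_or_pos i with rfl | hi0
        · rw [hnorm_f0]; exact le_max_left _ _
        · refine le_trans (hnorm_f_mid i hi0 (by omega)) (le_trans ?_ (le_max_right _ _))
          have : r ^ (p-1-i) ≤ r := pow_le_of_le_one hrpos.le hrle1 (by omega)
          exact mul_le_mul_of_nonneg_left this (by positivity)
      have hbound : ‖∑ i ∈ Finset.range (p-1), f i‖ ≤ C := by
        refine IsUltrametricDist.norm_sum_le_of_forall_le_of_nonneg ?_ hCle
        exact le_max_of_le_right (by positivity)
      rw [← norm_neg, ← hsplit, hnorm_fp] at hbound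
      have hClt : C < 1/p := by
        apply max_lt h
        calc (1/(p:ℝ)) * r < (1/p) * 1 := by
              exact mul_lt_mul_of_pos_left hr1 hppos
          _ = 1/p := mul_one _
      linarith
    · exact h
    · -- f 0 dominates: contradiction
      exfalso
      have hsplit : f 0 = - ∑ i ∈ Finset.range (p-1), f (i+1) := by
        have hh : ∑ i ∈ Finset.range (p-1), f (i+1) + f 0 = 0 := by
          have := Finset.sum_range_succ' f (p-1)
          rw [show p - 1 + 1 = p by omega] at this
          rw [← this]; exact hS
        exact eq_neg_of_add_eq_zero_right hh
      have hCle : ∀ i ∈ Finset.range (p-1), ‖f (i+1)‖ ≤ 1/(p:ℝ) := by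
        intro i hi
        have hip : i < p - 1 := Finset.mem_range.mp hi
        refine le_trans (hnorm_f_mid (i+1) (by omega) (by omega)) ?_
        calc (1/(p:ℝ)) * r ^ (p-1-(i+1)) ≤ (1/p) * 1 := by
              refine mul_le_mul_of_nonneg_left ?_ (by positivity)
              exact pow_le_one₀ hrpos.le hrle1
          _ = 1/p := mul_one _
      have hbound : ‖∑ i ∈ Finset.range (p-1), f (i+1)‖ ≤ 1/(p:ℝ) :=
        IsUltrametricDist.norm_sum_le_of_forall_le_of_nonneg hppos.le hCle
      rw [← norm_neg, ← hsplit, hnorm_f0] at hbound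
      linarith
  -- conclude
  have hcast : ((p - 1 : ℕ) : ℝ) = (p : ℝ) - 1 := by
    push_cast [Nat.cast_sub (by omega : 1 ≤ p)]; ring
  have he : (p : ℝ) - 1 ≠ 0 := by linarith
  have hfinal : r = ((1:ℝ)/p) ^ ((1:ℝ)/((p:ℝ)-1)) := by
    rw [← key, ← Real.rpow_natCast r (p-1), ← Real.rpow_mul hrpos.le, hcast,
      mul_one_div, div_self he, Real.rpow_one]
  rw [hr] at *
  rw [hfinal]
  rw [one_div, ← Real.rpow_neg_one (p:ℝ), ← Real.rpow_mul hpRpos.le]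
  congr 1
  ring
end

section
/- Let k be a nonarchimedean normed field and let p be a prime number with ‖(p : k)‖ = 1/p. Let z₁ ∈ k and let ρ be a real number with 0 ≤ ρ < ‖z₁‖. Set ρ̂ = max(ρ^p, p^(−1)·ρ·‖z₁‖^(p−1)); equivalently, ρ̂ = p^(−1)·ρ·‖z₁‖^(p−1) if ρ ≤ ‖z₁‖·p^(−1/(p−1)), and ρ̂ = ρ^p if ρ ≥ ‖z₁‖·p^(−1/(p−1)). Then for every polynomial P ∈ k[T] one has η_{z₁,ρ}(P(T^p)) = η_{z₁^p, ρ̂}(P). (In Berkovich-theoretic terms: the map z ↦ z^p on the affine line sends the point η_{z₁,ρ} to the point η_{z₁^p, ρ̂}.) -/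
open Polynomial

/-- The Gauss seminorm `η_{a,r}` on `k[T]`: for `P = Σ cᵢ (T - a)^i`,
`η_{a,r}(P) = max_i ‖cᵢ‖ * r^i`.  (The coefficients of the Taylor expansion of
`P` at `a` are the coefficients of `Polynomial.taylor a P`.) -/
noncomputable def gaussSeminorm {k : Type*} [NormedField k] (a : k) (r : ℝ)
    (P : Polynomial k) : ℝ :=
  (Finset.range (P.natDegree + 1)).sup' Finset.nonempty_range_add_one
    fun i => ‖(Polynomial.taylor a P).coeff i‖ * r ^ i

section Aux

variable {k : Type*} [NormedField k] [IsUltrametricDist k]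

/-- coefficients of `S.comp R` as a finite sum. -/
lemma aux_coeff_comp (S R : Polynomial k) (m : ℕ) :
    (S.comp R).coeff m =
      ∑ i ∈ Finset.range (S.natDegree + 1), S.coeff i * (R ^ i).coeff m := by
  conv_lhs => rw [comp, eval₂_eq_sum_range]
  rw [finset_sum_coeff]
  exact Finset.sum_congr rfl fun i _ => by rw [coeff_C_mul]

/-- Coefficient bound on powers of `R`. -/
lemma aux_pow_coeff_bound {R : Polynomial k} {r rh : ℝ} (hr : 0 ≤ r) (hrh : 0 ≤ rh)
    (hb : ∀ j, ‖R.coeff j‖ * r ^ j ≤ rh) :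
    ∀ i m : ℕ, ‖(R ^ i).coeff m‖ * r ^ m ≤ rh ^ i := by
  intro i
  induction i with
  | zero =>
    intro m
    match m with
    | 0 => simp
    | m + 1 => simp [coeff_one, pow_nonneg hr]
  | succ i ih =>
    intro m
    rw [pow_succ']
    rw [coeff_mul]
    obtain ⟨x, hx, hle⟩ := IsUltrametricDist.exists_norm_finset_sum_le_of_nonempty
      (t := Finset.HasAntidiagonal.antidiagonal m) ⟨(0, m), by simp⟩
      (fun x => R.coeff x.1 * (R ^ i).coeff x.2)
    rw [Finset.HasAntidiagonal.mem_antidiagonal] at hx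
    calc ‖∑ x ∈ Finset.HasAntidiagonal.antidiagonal m, R.coeff x.1 * (R ^ i).coeff x.2‖ * r ^ m
        ≤ ‖R.coeff x.1 * (R ^ i).coeff x.2‖ * r ^ m := by
          exact mul_le_mul_of_nonneg_right hle (pow_nonneg hr m)
      _ = (‖R.coeff x.1‖ * r ^ x.1) * (‖(R ^ i).coeff x.2‖ * r ^ x.2) := by
          rw [norm_mul, ← hx, pow_add]; ring
      _ ≤ rh * rh ^ i := by
          exact mul_le_mul (hb x.1) (ih x.2) (by positivity) hrh
      _ = rh ^ (i + 1) := by rw [pow_succ]; ring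

/-- If one term of the coefficient sum dominates, the norm is its norm. -/
lemma aux_coeff_norm_eq {S R : Polynomial k} {r M : ℝ} (hr : 0 ≤ r) (hM : 0 < M)
    {m i₀ : ℕ} (hi₀ : i₀ ∈ Finset.range (S.natDegree + 1))
    (hmain : ‖S.coeff i₀ * (R ^ i₀).coeff m‖ * r ^ m = M)
    (hrest : ∀ i ∈ Finset.range (S.natDegree + 1), i ≠ i₀ →
      ‖S.coeff i * (R ^ i).coeff m‖ * r ^ m < M) :
    ‖(S.comp R).coeff m‖ * r ^ m = M := by
  rw [aux_coeff_comp, ← Finset.add_sum_erase _ _ hi₀]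
  set E := ∑ i ∈ (Finset.range (S.natDegree + 1)).erase i₀,
    S.coeff i * (R ^ i).coeff m with hE
  have hrm : 0 < r ^ m := by
    rcases lt_or_eq_of_le (pow_nonneg hr m) with h | h
    · exact h
    · exfalso; rw [← h, mul_zero] at hmain; exact hM.ne' hmain.symm
  have hEnorm : ‖E‖ * r ^ m < M := by
    rcases Finset.eq_empty_or_nonempty ((Finset.range (S.natDegree + 1)).erase i₀) with h | h
    · rw [hE, h, Finset.sum_empty, norm_zero, zero_mul]; exact hM
    · obtain ⟨j, hj, hle⟩ := IsUltrametricDist.exists_norm_finset_sum_le_of_nonempty h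
        (fun i => S.coeff i * (R ^ i).coeff m)
      calc ‖E‖ * r ^ m ≤ ‖S.coeff j * (R ^ j).coeff m‖ * r ^ m :=
            mul_le_mul_of_nonneg_right hle hrm.le
        _ < M := hrest j (Finset.mem_of_mem_erase hj) (Finset.ne_of_mem_erase hj)
  have hlt : ‖E‖ < ‖S.coeff i₀ * (R ^ i₀).coeff m‖ := by
    exact lt_of_mul_lt_mul_right (by rw [hmain]; exact hEnorm) hrm.le
  have := IsUltrametricDist.norm_add_eq_max_of_norm_ne_norm
    (x := S.coeff i₀ * (R ^ i₀).coeff m) (y := E) (hlt.ne')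
  rw [this, max_eq_left hlt.le, hmain]

/-- Core lemma: the Gauss-type sup of `S.comp R` equals the one of `S`, when `R`
is a monic polynomial of degree `d` with zero constant coefficient, all of whose
coefficients satisfy `‖R.coeff j‖ r^j ≤ r̂`, with equality attained either at the
top (`r^d = r̂`) or at the bottom (`‖R.coeff 1‖ r = r̂`). -/
lemma aux_core {R : Polynomial k} {d : ℕ} {r rh : ℝ}
    (hr : 0 < r) (hrh : 0 < rh) (hd : 0 < d)
    (hmonic : R.Monic) (hdeg : R.natDegree = d) (h0 : R.coeff 0 = 0)
    (hb : ∀ j, ‖R.coeff j‖ * r ^ j ≤ rh)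
    (hex : r ^ d = rh ∨ ‖R.coeff 1‖ * r = rh) (S : Polynomial k) :
    (Finset.range (S.natDegree * d + 1)).sup' Finset.nonempty_range_add_one
      (fun m => ‖(S.comp R).coeff m‖ * r ^ m) =
    (Finset.range (S.natDegree + 1)).sup' Finset.nonempty_range_add_one
      (fun i => ‖S.coeff i‖ * rh ^ i) := by
  set n := S.natDegree with hn
  set M := (Finset.range (n + 1)).sup' Finset.nonempty_range_add_one
      (fun i => ‖S.coeff i‖ * rh ^ i) with hM
  -- upper bound
  have hub : ∀ m ∈ Finset.range (n * d + 1), ‖(S.comp R).coeff m‖ * r ^ m ≤ M := by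
    intro m _
    rw [aux_coeff_comp]
    obtain ⟨i, hi, hle⟩ := IsUltrametricDist.exists_norm_finset_sum_le_of_nonempty
      (t := Finset.range (n + 1)) Finset.nonempty_range_add_one
      (fun i => S.coeff i * (R ^ i).coeff m)
    calc ‖∑ i ∈ Finset.range (n + 1), S.coeff i * (R ^ i).coeff m‖ * r ^ m
        ≤ ‖S.coeff i * (R ^ i).coeff m‖ * r ^ m :=
          mul_le_mul_of_nonneg_right hle (pow_nonneg hr.le m)
      _ = ‖S.coeff i‖ * (‖(R ^ i).coeff m‖ * r ^ m) := by rw [norm_mul]; ring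
      _ ≤ ‖S.coeff i‖ * rh ^ i := by
          exact mul_le_mul_of_nonneg_left
            (aux_pow_coeff_bound hr.le hrh.le hb i m) (norm_nonneg _)
      _ ≤ M := hM ▸ Finset.le_sup' (f := fun i => ‖S.coeff i‖ * rh ^ i) hi
  -- lower bound; first dispose of the trivial case M ≤ 0
  have hM0 : 0 ≤ M := le_trans (by positivity)
    (Finset.le_sup' (f := fun i => ‖S.coeff i‖ * rh ^ i) (Finset.self_mem_range_succ n))
  rcases eq_or_lt_of_le hM0 with hMz | hMpos
  · refine le_antisymm (Finset.sup'_le _ _ hub) ?_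
    rw [← hMz]
    exact le_trans (by positivity)
      (Finset.le_sup' (f := fun m => ‖(S.comp R).coeff m‖ * r ^ m)
        (Finset.mem_range.mpr (Nat.lt_succ_of_le (Nat.zero_le _))))
  -- the set of maximizers
  have hAne : ∃ i ∈ Finset.range (n + 1), ‖S.coeff i‖ * rh ^ i = M := by
    obtain ⟨i, hi, hieq⟩ := Finset.exists_mem_eq_sup' (Finset.nonempty_range_add_one)
      (fun i => ‖S.coeff i‖ * rh ^ i)
    exact ⟨i, hi, hieq.symm⟩
  set A := (Finset.range (n + 1)).filter (fun i => ‖S.coeff i‖ * rh ^ i = M) with hA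
  have hAne' : A.Nonempty := by
    obtain ⟨i, hi, hieq⟩ := hAne
    exact ⟨i, Finset.mem_filter.mpr ⟨hi, hieq⟩⟩
  refine le_antisymm (Finset.sup'_le _ _ hub) ?_
  rcases hex with htop | hbot
  · -- top case: r ^ d = rh, use the largest maximizer
    set i₀ := A.max' hAne' with hi₀def
    have hi₀A : i₀ ∈ A := A.max'_mem hAne'
    obtain ⟨hi₀mem, hi₀eq⟩ := Finset.mem_filter.mp hi₀A
    have hstrict : ∀ i ∈ Finset.range (n + 1), i₀ < i → ‖S.coeff i‖ * rh ^ i < M := by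
      intro i hi hlt
      rcases lt_or_eq_of_le (hM ▸ Finset.le_sup' (f := fun i => ‖S.coeff i‖ * rh ^ i) hi)
        with h | h
      · exact h
      · exact absurd (A.le_max' i (Finset.mem_filter.mpr ⟨hi, h⟩)) (not_le.mpr hlt)
    have hm : d * i₀ ∈ Finset.range (n * d + 1) := by
      rw [Finset.mem_range, Nat.lt_succ_iff, mul_comm d i₀]
      exact Nat.mul_le_mul_right d (Nat.lt_succ_iff.mp (Finset.mem_range.mp hi₀mem))
    have hpowdeg : ∀ i : ℕ, (R ^ i).natDegree = i * d := by
      intro i; rw [hmonic.natDegree_pow, hdeg]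
    have hmain : ‖S.coeff i₀ * (R ^ i₀).coeff (d * i₀)‖ * r ^ (d * i₀) = M := by
      have : (R ^ i₀).coeff (d * i₀) = 1 := by
        have := (hmonic.pow i₀).coeff_natDegree
        rwa [hpowdeg i₀, mul_comm i₀ d] at this
      rw [this, mul_one, ← hi₀eq, ← htop, ← pow_mul]
    have hrest : ∀ i ∈ Finset.range (n + 1), i ≠ i₀ →
        ‖S.coeff i * (R ^ i).coeff (d * i₀)‖ * r ^ (d * i₀) < M := by
      intro i hi hne
      rcases lt_or_gt_of_ne hne with hlt | hgt
      · -- i < i₀ : coefficient vanishes (degree too small)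
        have : (R ^ i).coeff (d * i₀) = 0 := by
          apply coeff_eq_zero_of_natDegree_lt
          rw [hpowdeg i, mul_comm d i₀]
          exact (Nat.mul_lt_mul_right hd).mpr hlt
        rw [this, mul_zero, norm_zero, zero_mul]; exact hMpos
      · calc ‖S.coeff i * (R ^ i).coeff (d * i₀)‖ * r ^ (d * i₀)
            = ‖S.coeff i‖ * (‖(R ^ i).coeff (d * i₀)‖ * r ^ (d * i₀)) := by
              rw [norm_mul]; ring
          _ ≤ ‖S.coeff i‖ * rh ^ i :=
              mul_le_mul_of_nonneg_left
                (aux_pow_coeff_bound hr.le hrh.le hb i (d * i₀)) (norm_nonneg _)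
          _ < M := hstrict i hi hgt
    calc M = ‖(S.comp R).coeff (d * i₀)‖ * r ^ (d * i₀) :=
          (aux_coeff_norm_eq hr.le hMpos hi₀mem hmain hrest).symm
      _ ≤ _ := Finset.le_sup' (f := fun m => ‖(S.comp R).coeff m‖ * r ^ m) hm
  · -- bottom case: ‖R.coeff 1‖ * r = rh, use the smallest maximizer
    set i₀ := A.min' hAne' with hi₀def
    have hi₀A : i₀ ∈ A := A.min'_mem hAne'
    obtain ⟨hi₀mem, hi₀eq⟩ := Finset.mem_filter.mp hi₀A
    have hstrict : ∀ i ∈ Finset.range (n + 1), i < i₀ → ‖S.coeff i‖ * rh ^ i < M := by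
      intro i hi hlt
      rcases lt_or_eq_of_le (hM ▸ Finset.le_sup' (f := fun i => ‖S.coeff i‖ * rh ^ i) hi)
        with h | h
      · exact h
      · exact absurd (A.min'_le i (Finset.mem_filter.mpr ⟨hi, h⟩)) (not_le.mpr hlt)
    have hm : i₀ ∈ Finset.range (n * d + 1) := by
      rw [Finset.mem_range, Nat.lt_succ_iff]
      exact le_trans (Nat.lt_succ_iff.mp (Finset.mem_range.mp hi₀mem))
        (Nat.le_mul_of_pos_right n hd)
    -- write R = X * Q
    obtain ⟨Q, hQ⟩ := X_dvd_iff.mpr h0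
    have hQ0 : Q.coeff 0 = R.coeff 1 := by rw [hQ, coeff_X_mul]
    have hRpow : ∀ i m : ℕ, (R ^ i).coeff m =
        if i ≤ m then (Q ^ i).coeff (m - i) else 0 := by
      intro i m
      rw [hQ, mul_pow, (commute_X_pow (Q ^ i) i).eq, coeff_mul_X_pow']
    have hmain : ‖S.coeff i₀ * (R ^ i₀).coeff i₀‖ * r ^ i₀ = M := by
      have h1 : (R ^ i₀).coeff i₀ = (R.coeff 1) ^ i₀ := by
        rw [hRpow, if_pos le_rfl, Nat.sub_self, coeff_zero_eq_eval_zero, eval_pow,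
          ← coeff_zero_eq_eval_zero, hQ0]
      rw [h1, norm_mul, norm_pow, ← hi₀eq, ← hbot, mul_pow]
      ring
    have hrest : ∀ i ∈ Finset.range (n + 1), i ≠ i₀ →
        ‖S.coeff i * (R ^ i).coeff i₀‖ * r ^ i₀ < M := by
      intro i hi hne
      rcases lt_or_gt_of_ne hne with hlt | hgt
      · calc ‖S.coeff i * (R ^ i).coeff i₀‖ * r ^ i₀
            = ‖S.coeff i‖ * (‖(R ^ i).coeff i₀‖ * r ^ i₀) := by rw [norm_mul]; ring
          _ ≤ ‖S.coeff i‖ * rh ^ i :=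
              mul_le_mul_of_nonneg_left
                (aux_pow_coeff_bound hr.le hrh.le hb i i₀) (norm_nonneg _)
          _ < M := hstrict i hi hlt
      · have : (R ^ i).coeff i₀ = 0 := by
          rw [hRpow, if_neg (not_le.mpr hgt)]
        rw [this, mul_zero, norm_zero, zero_mul]; exact hMpos
    calc M = ‖(S.comp R).coeff i₀‖ * r ^ i₀ :=
          (aux_coeff_norm_eq hr.le hMpos hi₀mem hmain hrest).symm
      _ ≤ _ := Finset.le_sup' (f := fun m => ‖(S.comp R).coeff m‖ * r ^ m) hm

/-- Gauss seminorm at radius `0` is the evaluation norm. -/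
lemma gaussSeminorm_zero (a : k) (Q : Polynomial k) :
    gaussSeminorm a 0 Q = ‖Q.eval a‖ := by
  unfold gaussSeminorm
  apply le_antisymm
  · apply Finset.sup'_le
    intro i _
    match i with
    | 0 => simp [taylor_coeff_zero]
    | i + 1 => simp [norm_nonneg]
  · have h0 : (0 : ℕ) ∈ Finset.range (Q.natDegree + 1) :=
      Finset.mem_range.mpr (Nat.succ_pos _)
    have := Finset.le_sup'
      (f := fun i => ‖(Polynomial.taylor a Q).coeff i‖ * (0:ℝ) ^ i) h0
    exact le_trans (by simp [taylor_coeff_zero]) this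

end Aux

/-- **Image of the point `η_{z₁,ρ}` under `z ↦ z^p`.**
Let `k` be a nonarchimedean normed field, `p` prime with `‖(p : k)‖ = 1/p`,
`z₁ ∈ k` and `0 ≤ ρ < ‖z₁‖`.  Set `ρ̂ = max (ρ^p) (p⁻¹ * ρ * ‖z₁‖^(p-1))`.
Then for every polynomial `P`, `η_{z₁,ρ}(P(T^p)) = η_{z₁^p, ρ̂}(P)`;
i.e. the map `z ↦ z^p` sends the Berkovich point `η_{z₁,ρ}` to `η_{z₁^p, ρ̂}`. -/
theorem gaussSeminorm_comp_pow_p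
    {k : Type*} [NormedField k]
    (hna : ∀ x y : k, ‖x + y‖ ≤ max ‖x‖ ‖y‖)
    (p : ℕ) (hp : p.Prime) (hpnorm : ‖(p : k)‖ = 1 / p)
    (z₁ : k) (ρ : ℝ) (hρ0 : 0 ≤ ρ) (hρ : ρ < ‖z₁‖) :
    ∀ P : Polynomial k,
      gaussSeminorm z₁ ρ (P.comp (X ^ p)) =
        gaussSeminorm (z₁ ^ p) (max (ρ ^ p) ((p : ℝ)⁻¹ * ρ * ‖z₁‖ ^ (p - 1))) P := by
  haveI : IsUltrametricDist k :=
    IsUltrametricDist.isUltrametricDist_of_forall_norm_add_le_max_norm hna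
  intro P
  have hp1 : 1 ≤ p := hp.one_lt.le
  have hppos : (0:ℝ) < (p:ℝ) := by exact_mod_cast hp.pos
  -- case ρ = 0
  rcases eq_or_lt_of_le hρ0 with hzero | hρpos
  · subst hzero
    have hrh : max ((0:ℝ) ^ p) ((p : ℝ)⁻¹ * 0 * ‖z₁‖ ^ (p - 1)) = 0 := by
      rw [zero_pow hp.ne_zero, mul_zero, zero_mul, max_self]
    rw [hrh, gaussSeminorm_zero, gaussSeminorm_zero, eval_comp, eval_pow, eval_X]
  -- main case ρ > 0
  have hz₁pos : (0:ℝ) < ‖z₁‖ := lt_trans hρpos hρ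
  have hz₁ : z₁ ≠ 0 := by
    intro h; rw [h, norm_zero] at hz₁pos; exact lt_irrefl _ hz₁pos
  set rh := max (ρ ^ p) ((p : ℝ)⁻¹ * ρ * ‖z₁‖ ^ (p - 1)) with hrhdef
  have hrhpos : 0 < rh := lt_of_lt_of_le (by positivity) (le_max_right _ _)
  set R : Polynomial k := (X + C z₁) ^ p - C (z₁ ^ p) with hR
  have hcoeff : ∀ j : ℕ, 1 ≤ j → R.coeff j = z₁ ^ (p - j) * (p.choose j : k) := by
    intro j hj
    rw [hR, coeff_sub, coeff_X_add_C_pow, coeff_C,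
      if_neg (by omega : ¬ j = 0), sub_zero]
  have hdeg : R.natDegree = p := by
    rw [hR, natDegree_sub_C, natDegree_pow_X_add_C]
  have hmonic : R.Monic := by
    have hc : R.coeff p = 1 := by
      rw [hcoeff p hp1, Nat.sub_self, pow_zero, one_mul, Nat.choose_self, Nat.cast_one]
    rw [Monic, leadingCoeff, hdeg, hc]
  have h0 : R.coeff 0 = 0 := by
    rw [hR, coeff_sub, coeff_X_add_C_pow, coeff_C, if_pos rfl, Nat.sub_zero,
      Nat.choose_zero_right, Nat.cast_one, mul_one, sub_self]
  have hc1 : ‖R.coeff 1‖ = (p:ℝ)⁻¹ * ‖z₁‖ ^ (p - 1) := by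
    rw [hcoeff 1 le_rfl, Nat.choose_one_right, norm_mul, norm_pow, hpnorm,
      one_div, mul_comm]
  -- coefficient bounds
  have hmid : ∀ j : ℕ, 1 ≤ j → j ≤ p → ‖z₁‖ ^ (p - j) * ρ ^ j ≤ ρ * ‖z₁‖ ^ (p - 1) := by
    intro j hj hjp
    have h1 : ρ ^ j = ρ * ρ ^ (j - 1) := by
      conv_lhs => rw [show j = 1 + (j - 1) by omega]
      rw [pow_add, pow_one]
    have h2 : ρ ^ (j - 1) ≤ ‖z₁‖ ^ (j - 1) := pow_le_pow_left₀ hρ0 hρ.le _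
    calc ‖z₁‖ ^ (p - j) * ρ ^ j = ρ * (‖z₁‖ ^ (p - j) * ρ ^ (j - 1)) := by
          rw [h1]; ring
      _ ≤ ρ * (‖z₁‖ ^ (p - j) * ‖z₁‖ ^ (j - 1)) := by
          apply mul_le_mul_of_nonneg_left _ hρ0
          exact mul_le_mul_of_nonneg_left h2 (by positivity)
      _ = ρ * ‖z₁‖ ^ (p - 1) := by
          rw [← pow_add, show p - j + (j - 1) = p - 1 by omega]
  have hb : ∀ j : ℕ, ‖R.coeff j‖ * ρ ^ j ≤ rh := by
    intro j
    rcases Nat.eq_zero_or_pos j with rfl | hj1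
    · rw [h0, norm_zero, zero_mul]; exact hrhpos.le
    rcases lt_or_ge p j with hjp | hjp
    · rw [coeff_eq_zero_of_natDegree_lt (by rw [hdeg]; exact hjp), norm_zero, zero_mul]
      exact hrhpos.le
    rcases eq_or_lt_of_le hjp with rfl | hjlt
    · rw [hcoeff j hj1, Nat.sub_self, pow_zero, one_mul, Nat.choose_self, Nat.cast_one,
        norm_one, one_mul]
      exact le_max_left _ _
    · -- 1 ≤ j < p
      have hdvd : p ∣ p.choose j := hp.dvd_choose_self (by omega) hjlt
      obtain ⟨t, ht⟩ := hdvd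
      have hct : ‖(p.choose j : k)‖ ≤ (p:ℝ)⁻¹ := by
        rw [ht, Nat.cast_mul, norm_mul, hpnorm, one_div]
        calc (p:ℝ)⁻¹ * ‖(t:k)‖ ≤ (p:ℝ)⁻¹ * 1 :=
              mul_le_mul_of_nonneg_left (IsUltrametricDist.norm_natCast_le_one k t)
                (by positivity)
          _ = (p:ℝ)⁻¹ := mul_one _
      calc ‖R.coeff j‖ * ρ ^ j = ‖z₁‖ ^ (p - j) * ‖(p.choose j : k)‖ * ρ ^ j := by
            rw [hcoeff j hj1, norm_mul, norm_pow]
        _ ≤ ‖z₁‖ ^ (p - j) * (p:ℝ)⁻¹ * ρ ^ j := by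
            apply mul_le_mul_of_nonneg_right _ (by positivity)
            exact mul_le_mul_of_nonneg_left hct (by positivity)
        _ = (p:ℝ)⁻¹ * (‖z₁‖ ^ (p - j) * ρ ^ j) := by ring
        _ ≤ (p:ℝ)⁻¹ * (ρ * ‖z₁‖ ^ (p - 1)) :=
            mul_le_mul_of_nonneg_left (hmid j hj1 hjlt.le) (by positivity)
        _ = (p:ℝ)⁻¹ * ρ * ‖z₁‖ ^ (p - 1) := by ring
        _ ≤ rh := le_max_right _ _
  have hex : ρ ^ p = rh ∨ ‖R.coeff 1‖ * ρ = rh := by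
    rcases max_cases (ρ ^ p) ((p : ℝ)⁻¹ * ρ * ‖z₁‖ ^ (p - 1)) with ⟨h, _⟩ | ⟨h, _⟩
    · left; rw [hrhdef, h]
    · right; rw [hrhdef, h, hc1]; ring
  -- taylor identity
  have key : Polynomial.taylor z₁ (P.comp (X ^ p)) =
      (Polynomial.taylor (z₁ ^ p) P).comp R := by
    rw [taylor_apply, taylor_apply, comp_assoc, comp_assoc]
    congr 1
    rw [X_pow_comp, add_comp, X_comp, C_comp, hR, sub_add_cancel]
  -- unfold gaussSeminorm and apply core lemma
  have hndeg : (P.comp (X ^ p)).natDegree = P.natDegree * p := by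
    rw [natDegree_comp, natDegree_X_pow]
  have hS : (Polynomial.taylor (z₁ ^ p) P).natDegree = P.natDegree :=
    natDegree_taylor P (z₁ ^ p)
  unfold gaussSeminorm
  simp only [key, hndeg]
  have := aux_core (k := k) hρpos hrhpos hp.pos hmonic hdeg h0 hb hex
    (Polynomial.taylor (z₁ ^ p) P)
  rw [hS] at this
  exact this
end

section
/- Let G be a group and let V ≤ H be subgroups of G with n = [H : V] finite. Then for every g ∈ G: (a) if [V : V ∩ gVg⁻¹] = r is finite, then [H : H ∩ gHg⁻¹] is finite and [H : H ∩ gHg⁻¹] ≤ r·n; (b) if [H : H ∩ gHg⁻¹] = s is finite, then [V : V ∩ gVg⁻¹] is finite and [V : V ∩ gVg⁻¹] ≤ s·n. -/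
/-- The conjugate subgroup `gKg⁻¹ = {g k g⁻¹ : k ∈ K}`. -/
def conjSubgroup {G : Type*} [Group G] (g : G) (K : Subgroup G) : Subgroup G :=
  K.map (MulAut.conj g).toMonoidHom

lemma conjSubgroup_eq_comap {G : Type*} [Group G] (g : G) (K : Subgroup G) :
    conjSubgroup g K = K.comap (MulAut.conj g⁻¹).toMonoidHom := by
  ext x
  simp only [conjSubgroup, Subgroup.mem_map, Subgroup.mem_comap,
    MulEquiv.coe_toMonoidHom, MulAut.conj_apply, inv_inv]
  constructor
  · rintro ⟨y, hy, rfl⟩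
    convert hy using 2
    group
  · intro hx
    exact ⟨g⁻¹ * x * g, hx, by group⟩

lemma conjSubgroup_mono {G : Type*} [Group G] (g : G) {K L : Subgroup G} (h : K ≤ L) :
    conjSubgroup g K ≤ conjSubgroup g L := Subgroup.map_mono h

lemma conjSubgroup_relIndex {G : Type*} [Group G] (g : G) (V H : Subgroup G) :
    (conjSubgroup g V).relIndex (conjSubgroup g H) = V.relIndex H := by
  rw [conjSubgroup_eq_comap, Subgroup.relIndex_comap]
  congr 1
  show ((conjSubgroup g H).map (MulAut.conj g⁻¹).toMonoidHom) = H
  rw [conjSubgroup]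
  ext x
  simp only [Subgroup.mem_map, MulEquiv.coe_toMonoidHom, MulAut.conj_apply, inv_inv]
  constructor
  · rintro ⟨y, ⟨z, hz, rfl⟩, rfl⟩
    convert hz using 2
    group
  · intro hx
    exact ⟨g * x * g⁻¹, ⟨x, hx, rfl⟩, by group⟩

/-- **Index estimates between a subgroup and a finite-index subgroup under conjugation.**
Let `V ≤ H` be subgroups of `G` with `n = [H : V]` finite.  For every `g ∈ G`:
(a) if `[V : V ∩ gVg⁻¹] = r` is finite, then `[H : H ∩ gHg⁻¹]` is finite and
`[H : H ∩ gHg⁻¹] ≤ r·n`;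
(b) if `[H : H ∩ gHg⁻¹] = s` is finite, then `[V : V ∩ gVg⁻¹]` is finite and
`[V : V ∩ gVg⁻¹] ≤ s·n`.
(Here, as in Mathlib, `A.relindex B` denotes the index `[B : A ∩ B]`, and an
index is finite iff it is nonzero.) -/
theorem conj_relindex_le_of_finite_relindex
    {G : Type*} [Group G] (V H : Subgroup G) (hVH : V ≤ H)
    (n : ℕ) (hn : V.relIndex H = n) (hn0 : n ≠ 0) (g : G) :
    (∀ r : ℕ, r ≠ 0 → (conjSubgroup g V).relIndex V = r →
        (conjSubgroup g H).relIndex H ≠ 0 ∧ (conjSubgroup g H).relIndex H ≤ r * n) ∧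
    (∀ s : ℕ, s ≠ 0 → (conjSubgroup g H).relIndex H = s →
        (conjSubgroup g V).relIndex V ≠ 0 ∧ (conjSubgroup g V).relIndex V ≤ s * n) := by
  set A := conjSubgroup g V with hA
  set B := conjSubgroup g H with hB
  have hAB : A ≤ B := conjSubgroup_mono g hVH
  have hABn : A.relIndex B = n := by rw [hA, hB, conjSubgroup_relIndex, hn]
  constructor
  · intro r hr hrel
    -- (A ⊓ V).relIndex H = A.relIndex V * V.relIndex H = r * n
    have key : (A ⊓ V).relIndex H = r * n := by
      have := Subgroup.relIndex_inf_mul_relIndex A V H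
      rw [inf_of_le_left hVH, hrel, hn] at this
      exact this.symm
    have hrn : r * n ≠ 0 := mul_ne_zero hr hn0
    have h1 : A.relIndex H ∣ (A ⊓ V).relIndex H :=
      Subgroup.relIndex_dvd_of_le_left H inf_le_left
    have hAH : A.relIndex H ≠ 0 := fun h => hrn (by
      rw [← key]; exact Nat.eq_zero_of_zero_dvd (h ▸ h1))
    have h2 : B.relIndex H ∣ A.relIndex H := Subgroup.relIndex_dvd_of_le_left H hAB
    refine ⟨fun h => ?_, ?_⟩
    · exact hAH (Nat.eq_zero_of_zero_dvd (h ▸ h2))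
    · calc B.relIndex H ≤ A.relIndex H := Nat.le_of_dvd (Nat.pos_of_ne_zero hAH) h2
        _ ≤ (A ⊓ V).relIndex H := Nat.le_of_dvd (by rw [key]; exact Nat.pos_of_ne_zero hrn) h1
        _ = r * n := key
  · intro s hs hrel
    -- A.relIndex V = (A ⊓ V).relIndex (B ⊓ V) * (B ⊓ V).relIndex V
    have e1 : (A ⊓ V).relIndex V = A.relIndex V := Subgroup.inf_relIndex_right _ _
    have hAinf : A ⊓ V = A ⊓ (B ⊓ V) := by rw [← inf_assoc, inf_of_le_left hAB]
    have e2 : (A ⊓ V).relIndex (B ⊓ V) = A.relIndex (B ⊓ V) := by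
      rw [hAinf]; exact Subgroup.inf_relIndex_right _ _
    have e3 : (B ⊓ V).relIndex V = B.relIndex V := Subgroup.inf_relIndex_right _ _
    have mul : (A ⊓ V).relIndex (B ⊓ V) * (B ⊓ V).relIndex V = (A ⊓ V).relIndex V :=
      Subgroup.relIndex_mul_relIndex _ _ _ (by rw [hAinf]; exact inf_le_right)
        inf_le_right
    have hb1 : A.relIndex (B ⊓ V) ≤ n := by
      rw [← hABn]
      exact Subgroup.relIndex_le_of_le_right inf_le_left (by rw [hABn]; exact hn0)
    have hb2 : B.relIndex V ≤ s := by
      rw [← hrel]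
      exact Subgroup.relIndex_le_of_le_right hVH (by rw [hrel]; exact hs)
    constructor
    · rw [← e1, ← mul, e2, e3]
      apply mul_ne_zero
      · intro h
        exact hn0 (by rw [← hABn]; exact Subgroup.relIndex_eq_zero_of_le_right inf_le_left h)
      · intro h
        exact hs (by rw [← hrel]; exact Subgroup.relIndex_eq_zero_of_le_right hVH h)
    · calc A.relIndex V = A.relIndex (B ⊓ V) * B.relIndex V := by rw [← e1, ← mul, e2, e3]
        _ ≤ n * s := Nat.mul_le_mul hb1 hb2
        _ = s * n := Nat.mul_comm n s
end

section
/- Let (V, B, ε, σ) be a connected, locally finite semi-graph and A an additive commutative group. Let b₁, b₂, b₃ ∈ B be three pairwise distinct open branches (σ bᵢ = bᵢ for i = 1, 2, 3) and let a, a' ∈ A. Then there exists a harmonic A-cochain f : B → A such that f(b₁) = a, f(b₂) = a', f(b₃) = −(a + a'), and f(b) = 0 for every open branch b not in {b₁, b₂, b₃}. -/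
open scoped Classical in
/-- Flow of value `c` along a sequence of branches. -/
private noncomputable def pathFlow {B : Type*} {A : Type*} [AddCommGroup A] (σ : B → B) (c : A)
    {n : ℕ} (es : Fin n → B) (b : B) : A :=
  ∑ t : Fin n, ((if b = es t then c else 0) - (if b = σ (es t) then c else 0))

private lemma pathFlow_sigma {B A : Type*} [AddCommGroup A] (σ : B → B)
    (hσ : ∀ b, σ (σ b) = b) (c : A) {n : ℕ} (es : Fin n → B) (b : B) :
    pathFlow σ c es (σ b) = - pathFlow σ c es b := by
  classical
  unfold pathFlow
  rw [← Finset.sum_neg_distrib]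
  refine Finset.sum_congr rfl fun t _ => ?_
  have h1 : σ b = es t ↔ b = σ (es t) := by
    constructor
    · intro h; rw [← h, hσ]
    · intro h; rw [h, hσ]
  have h2 : σ b = σ (es t) ↔ b = es t := by
    constructor
    · intro h; have := congrArg σ h; rwa [hσ, hσ] at this
    · intro h; rw [h]
  rw [if_congr h1 rfl rfl, if_congr h2 rfl rfl]
  abel

private lemma pathFlow_open {B A : Type*} [AddCommGroup A] (σ : B → B)
    (hσ : ∀ b, σ (σ b) = b)
    (c : A) {n : ℕ} (es : Fin n → B) (b : B) (hb : σ b = b) :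
    pathFlow σ c es b = 0 := by
  classical
  unfold pathFlow
  refine Finset.sum_eq_zero fun t _ => ?_
  have h1 : b = es t ↔ b = σ (es t) := by
    constructor
    · intro h; rw [h] at hb ⊢; rw [hb]
    · intro h; rw [h] at hb ⊢; rw [← hb, hσ]
  rw [if_congr h1 rfl rfl, sub_self]

private lemma telescope_fin {A : Type*} [AddCommGroup A] :
    ∀ (n : ℕ) (g : Fin (n + 1) → A),
      ∑ t : Fin n, (g t.castSucc - g t.succ) = g 0 - g (Fin.last n) := by
  intro n
  induction n with
  | zero => intro g; simp
  | succ n ih =>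
    intro g
    rw [Fin.sum_univ_castSucc]
    have h := ih (fun i => g i.castSucc)
    simp only [Fin.succ_castSucc] at *
    rw [h, Fin.succ_last]
    simp only [Fin.castSucc_zero]
    abel

open scoped Classical in
private lemma pathFlow_vertex_sum {V B A : Type*} [AddCommGroup A]
    (ε : B → V) (σ : B → B) (c : A) {n : ℕ} (es : Fin n → B)
    (vs : Fin (n + 1) → V)
    (hes : ∀ t : Fin n, ε (es t) = vs t.castSucc)
    (hes' : ∀ t : Fin n, ε (σ (es t)) = vs t.succ)
    (v : V) (S : Finset B) (hS : ∀ b, b ∈ S ↔ ε b = v) :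
    ∑ b ∈ S, pathFlow σ c es b =
      (if vs 0 = v then c else 0) - (if vs (Fin.last n) = v then c else 0) := by
  unfold pathFlow
  rw [Finset.sum_comm]
  rw [← telescope_fin n (fun i => if vs i = v then c else 0)]
  refine Finset.sum_congr rfl fun t _ => ?_
  rw [Finset.sum_sub_distrib, Finset.sum_ite_eq' S (es t) (fun _ => c),
    Finset.sum_ite_eq' S (σ (es t)) (fun _ => c)]
  simp only [hS, hes, hes']

/-- **Existence of harmonic cochains with prescribed values on three open branches.**
Let `(V, B, ε, σ)` be a connected, locally finite semi-graph and `A` an additive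
commutative group.  Let `b₁, b₂, b₃` be three pairwise distinct open branches
(`σ bᵢ = bᵢ`) and `a, a' ∈ A`.  Then there is a harmonic `A`-cochain
`f : B → A` (i.e. `f (σ b) = - f b` for every branch of a closed edge and, at
every vertex `v`, the sum of `f` over the branches ending at `v` vanishes) with
`f b₁ = a`, `f b₂ = a'`, `f b₃ = -(a + a')`, and `f b = 0` for every open
branch `b ∉ {b₁, b₂, b₃}`. -/
theorem exists_harmonic_cochain_prescribed_on_three_open_branches
    {V B : Type*} (ε : B → V) (σ : B → B)
    (hσ : ∀ b, σ (σ b) = b)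
    (hlocfin : ∀ v : V, {b : B | ε b = v}.Finite)
    (hconn : ∀ v w : V, ∃ (n : ℕ) (vs : Fin (n + 1) → V), vs 0 = v ∧
        vs (Fin.last n) = w ∧
        ∀ t : Fin n, ∃ b : B, ε b = vs t.castSucc ∧ ε (σ b) = vs t.succ)
    {A : Type*} [AddCommGroup A]
    (b₁ b₂ b₃ : B) (h₁ : σ b₁ = b₁) (h₂ : σ b₂ = b₂) (h₃ : σ b₃ = b₃)
    (h₁₂ : b₁ ≠ b₂) (h₁₃ : b₁ ≠ b₃) (h₂₃ : b₂ ≠ b₃)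
    (a a' : A) :
    ∃ f : B → A,
      (∀ b : B, σ b ≠ b → f (σ b) = - f b) ∧
      (∀ v : V, ∑ᶠ b ∈ {b : B | ε b = v}, f b = 0) ∧
      f b₁ = a ∧ f b₂ = a' ∧ f b₃ = -(a + a') ∧
      (∀ b : B, σ b = b → b ∉ ({b₁, b₂, b₃} : Set B) → f b = 0) := by
  classical
  obtain ⟨n₁, vs₁, hv₁0, hv₁l, hstep₁⟩ := hconn (ε b₁) (ε b₃)
  obtain ⟨n₂, vs₂, hv₂0, hv₂l, hstep₂⟩ := hconn (ε b₂) (ε b₃)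
  choose e₁ he₁ he₁' using hstep₁
  choose e₂ he₂ he₂' using hstep₂
  refine ⟨fun b => (if b = b₁ then a else 0) + (if b = b₂ then a' else 0) +
      (if b = b₃ then -(a + a') else 0) - pathFlow σ a e₁ b - pathFlow σ a' e₂ b,
      ?_, ?_, ?_, ?_, ?_, ?_⟩
  · intro b hb
    have k₁ : b ≠ b₁ := fun h => hb (by rw [h, h₁])
    have k₂ : b ≠ b₂ := fun h => hb (by rw [h, h₂])
    have k₃ : b ≠ b₃ := fun h => hb (by rw [h, h₃])
    have k₁' : σ b ≠ b₁ := fun h => hb (by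
      have h' := congrArg σ h; rw [hσ, h₁] at h'; rw [h, h'])
    have k₂' : σ b ≠ b₂ := fun h => hb (by
      have h' := congrArg σ h; rw [hσ, h₂] at h'; rw [h, h'])
    have k₃' : σ b ≠ b₃ := fun h => hb (by
      have h' := congrArg σ h; rw [hσ, h₃] at h'; rw [h, h'])
    simp only [pathFlow_sigma σ hσ, if_neg k₁, if_neg k₂, if_neg k₃, if_neg k₁',
      if_neg k₂', if_neg k₃']
    abel
  · intro v
    rw [finsum_mem_eq_finite_toFinset_sum _ (hlocfin v)]
    have hS : ∀ b, b ∈ (hlocfin v).toFinset ↔ ε b = v := fun b => by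
      simp [Set.Finite.mem_toFinset]
    rw [Finset.sum_sub_distrib, Finset.sum_sub_distrib, Finset.sum_add_distrib,
      Finset.sum_add_distrib,
      Finset.sum_ite_eq' _ b₁ (fun _ => a), Finset.sum_ite_eq' _ b₂ (fun _ => a'),
      Finset.sum_ite_eq' _ b₃ (fun _ => -(a + a')),
      pathFlow_vertex_sum ε σ a e₁ vs₁ he₁ he₁' v _ hS,
      pathFlow_vertex_sum ε σ a' e₂ vs₂ he₂ he₂' v _ hS]
    simp only [hS, hv₁0, hv₁l, hv₂0, hv₂l]
    split_ifs <;> abel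
  · simp [pathFlow_open σ hσ _ _ _ h₁, h₁₂, h₁₃]
  · simp [pathFlow_open σ hσ _ _ _ h₂, h₁₂.symm, h₂₃]
  · simp [pathFlow_open σ hσ _ _ _ h₃, h₁₃.symm, h₂₃.symm]
  · intro b hb hbmem
    simp only [Set.mem_insert_iff, Set.mem_singleton_iff, not_or] at hbmem
    obtain ⟨k₁, k₂, k₃⟩ := hbmem
    simp [pathFlow_open σ hσ _ _ _ hb, k₁, k₂, k₃]
end

section
/- Let I be a finite index type and for each i ∈ I let C_i be a Galois category; let C = ∏_{i ∈ I} C_i be the product category (its initial object is the family of the initial objects of the C_i, and coproducts are computed componentwise). An object X = (X_i)_{i ∈ I} of C is connected if and only if there exists exactly one index i₀ ∈ I such that X_{i₀} is not initial in C_{i₀}, and moreover X_{i₀} is a connected object of C_{i₀}. -/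
open CategoryTheory CategoryTheory.Limits

/-- An object of a category is *connected* if it is not initial and is not
isomorphic to a coproduct of two non-initial objects.  (The coproduct condition
is expressed via binary cofans together with colimit data, so that no
`HasBinaryCoproducts` instance is needed.) -/
def IsConnectedObj {C : Type*} [Category C] (X : C) : Prop :=
  (¬ Nonempty (IsInitial X)) ∧
  ∀ (Y₁ Y₂ : C) (c : BinaryCofan Y₁ Y₂), Nonempty (IsColimit c) →
    Nonempty (c.pt ≅ X) → Nonempty (IsInitial Y₁) ∨ Nonempty (IsInitial Y₂)

section Helpers

variable {I : Type*} {C : I → Type*} [∀ i, Category (C i)]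

/-- A pointwise-initial family is initial in the product category. -/
noncomputable def piIsInitial {X : ∀ i, C i} (h : ∀ i, IsInitial (X i)) : IsInitial X :=
  IsInitial.ofUniqueHom (fun Y i => (h i).to (Y i))
    (fun _ _ => funext fun i => (h i).hom_ext _ _)

/-- Componentwise iso extracted from an iso in the product category. -/
def piIsoApp {X Y : ∀ i, C i} (e : X ≅ Y) (i : I) : X i ≅ Y i where
  hom := e.hom i
  inv := e.inv i
  hom_inv_id := congrFun e.hom_inv_id i
  inv_hom_id := congrFun e.inv_hom_id i

/-- Components of an initial family are initial. -/
noncomputable def evalIsInitial [∀ i, HasInitial (C i)] {X : ∀ i, C i}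
    (h : IsInitial X) (i : I) : IsInitial (X i) := by
  have hbot : IsInitial (fun i => ⊥_ (C i) : ∀ i, C i) :=
    piIsInitial fun i => initialIsInitial
  exact initialIsInitial.ofIso (piIsoApp (h.uniqueUpToIso hbot) i).symm

/-- A binary cofan in a product category that is a componentwise colimit is a colimit. -/
noncomputable def piBinaryCofanIsColimit {A B P : ∀ i, C i} (f : A ⟶ P) (g : B ⟶ P)
    (h : ∀ i, IsColimit (BinaryCofan.mk (f i) (g i))) :
    IsColimit (BinaryCofan.mk f g) :=
  BinaryCofan.isColimitMk
    (fun s i => (h i).desc (BinaryCofan.mk (s.inl i) (s.inr i)))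
    (fun s => funext fun i => (h i).fac (BinaryCofan.mk (s.inl i) (s.inr i)) ⟨WalkingPair.left⟩)
    (fun s => funext fun i => (h i).fac (BinaryCofan.mk (s.inl i) (s.inr i)) ⟨WalkingPair.right⟩)
    (fun s m h1 h2 => funext fun i =>
      (h i).uniq (BinaryCofan.mk (s.inl i) (s.inr i)) (m i) (by
        rintro ⟨⟨⟩⟩
        · exact congrFun h1 i
        · exact congrFun h2 i))

/-- Components of a colimit binary cofan in a product category are colimits. -/
noncomputable def evalBinaryCofanIsColimit [∀ i, HasBinaryCoproducts (C i)]
    {A B : ∀ i, C i} (c : BinaryCofan A B) (hc : IsColimit c) (i : I) :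
    IsColimit (BinaryCofan.mk (c.inl i) (c.inr i)) := by
  let d : BinaryCofan A B := BinaryCofan.mk
    (fun j => (coprod.inl : A j ⟶ A j ⨿ B j)) (fun j => (coprod.inr : B j ⟶ A j ⨿ B j))
  have hd : IsColimit d := piBinaryCofanIsColimit _ _ (fun j => coprodIsCoprod (A j) (B j))
  let u := hd.coconePointUniqueUpToIso hc
  refine IsColimit.ofIsoColimit (coprodIsCoprod (A i) (B i))
    (Cocones.ext (piIsoApp u i) ?_)
  rintro ⟨⟨⟩⟩
  · exact congrFun (hd.comp_coconePointUniqueUpToIso_hom hc ⟨WalkingPair.left⟩) i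
  · exact congrFun (hd.comp_coconePointUniqueUpToIso_hom hc ⟨WalkingPair.right⟩) i

end Helpers

section Cofans

variable {D : Type*} [Category D]

/-- A cofan whose left leg is iso and right leg comes from an initial object is a colimit. -/
noncomputable def cofanInitialRight {A B P : D} (f : A ⟶ P) [IsIso f]
    (hB : IsInitial B) (g : B ⟶ P) : IsColimit (BinaryCofan.mk f g) :=
  BinaryCofan.isColimitMk (fun s => inv f ≫ s.inl)
    (fun s => IsIso.hom_inv_id_assoc f _)
    (fun s => hB.hom_ext _ _)
    (fun s m h1 _ => by show m = inv f ≫ s.inl; rw [← h1, IsIso.inv_hom_id_assoc])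

/-- A cofan whose right leg is iso and left leg comes from an initial object is a colimit. -/
noncomputable def cofanInitialLeft {A B P : D} (hA : IsInitial A) (f : A ⟶ P)
    (g : B ⟶ P) [IsIso g] : IsColimit (BinaryCofan.mk f g) :=
  BinaryCofan.isColimitMk (fun s => inv g ≫ s.inr)
    (fun s => hA.hom_ext _ _)
    (fun s => IsIso.hom_inv_id_assoc g _)
    (fun s m _ h2 => by show m = inv g ≫ s.inr; rw [← h2, IsIso.inv_hom_id_assoc])

/-- A cofan of initial objects over an initial object is a colimit. -/
noncomputable def cofanAllInitial {A B P : D} (hA : IsInitial A) (hB : IsInitial B)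
    (hP : IsInitial P) (f : A ⟶ P) (g : B ⟶ P) : IsColimit (BinaryCofan.mk f g) :=
  BinaryCofan.isColimitMk (fun s => hP.to s.pt)
    (fun _ => hA.hom_ext _ _)
    (fun _ => hB.hom_ext _ _)
    (fun _ _ _ _ => hP.hom_ext _ _)

/-- Transport a binary-cofan colimit along isos on all three objects. -/
noncomputable def isColimitBinaryCofanOfIsos {A A' B B' P P' : D}
    {f : A ⟶ P} {g : B ⟶ P} (h : IsColimit (BinaryCofan.mk f g))
    (eA : A' ≅ A) (eB : B' ≅ B) (eP : P ≅ P') :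
    IsColimit (BinaryCofan.mk (eA.hom ≫ f ≫ eP.hom) (eB.hom ≫ g ≫ eP.hom)) := by
  refine BinaryCofan.isColimitMk
    (fun s => eP.inv ≫ h.desc (BinaryCofan.mk (eA.inv ≫ s.inl) (eB.inv ≫ s.inr))) ?_ ?_ ?_
  · intro s
    have := h.fac (BinaryCofan.mk (eA.inv ≫ s.inl) (eB.inv ≫ s.inr)) ⟨WalkingPair.left⟩
    simp only [BinaryCofan.mk_pt, BinaryCofan.ι_app_left, BinaryCofan.mk_inl] at this ⊢
    simp only [Category.assoc, Iso.hom_inv_id_assoc]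
    exact (congrArg (fun t => eA.hom ≫ f ≫ t) (eP.hom_inv_id_assoc _)).trans
      ((congrArg (fun t => eA.hom ≫ t) this).trans (eA.hom_inv_id_assoc _))
  · intro s
    have := h.fac (BinaryCofan.mk (eA.inv ≫ s.inl) (eB.inv ≫ s.inr)) ⟨WalkingPair.right⟩
    simp only [BinaryCofan.mk_pt, BinaryCofan.ι_app_right, BinaryCofan.mk_inr] at this ⊢
    simp only [Category.assoc, Iso.hom_inv_id_assoc]
    exact (congrArg (fun t => eB.hom ≫ g ≫ t) (eP.hom_inv_id_assoc _)).trans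
      ((congrArg (fun t => eB.hom ≫ t) this).trans (eB.hom_inv_id_assoc _))
  · intro s m h1 h2
    have := h.uniq (BinaryCofan.mk (eA.inv ≫ s.inl) (eB.inv ≫ s.inr)) (eP.hom ≫ m) (by
      rintro ⟨⟨⟩⟩
      · have := congrArg (fun t => eA.inv ≫ t) h1
        simp only [Category.assoc, Iso.inv_hom_id_assoc] at this
        exact this
      · have := congrArg (fun t => eB.inv ≫ t) h2
        simp only [Category.assoc, Iso.inv_hom_id_assoc] at this
        exact this)
    rw [← eP.inv_hom_id_assoc m]
    exact congrArg (fun t => eP.inv ≫ t) this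

/-- A cofan `c` is a colimit iff `BinaryCofan.mk c.inl c.inr` is. -/
noncomputable def isColimitMkOfIsColimit {A B : D} (c : BinaryCofan A B) (hc : IsColimit c) :
    IsColimit (BinaryCofan.mk c.inl c.inr) :=
  hc.ofIsoColimit (Cocones.ext (Iso.refl _) (by rintro ⟨⟨⟩⟩ <;> exact Category.comp_id _))

/-- In a Galois category, the initial object is strict: anything mapping to an
initial object is initial. -/
lemma nonempty_isInitial_of_hom {E : Type*} [Category E] [GaloisCategory E]
    {A B : E} (hB : IsInitial B) (f : A ⟶ B) : Nonempty (IsInitial A) := by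
  let F := PreGaloisCategory.GaloisCategory.getFiberFunctor E
  rw [PreGaloisCategory.initial_iff_fiber_empty F]
  have hB' : IsEmpty (F.obj B) := (PreGaloisCategory.initial_iff_fiber_empty F B).mp ⟨hB⟩
  exact ⟨fun a => hB'.elim (F.map f a)⟩

end Cofans

section Ext

variable {I : Type*} [DecidableEq I] {C : I → Type*} [∀ i, Category (C i)]
  [∀ i, HasInitial (C i)]

/-- Extend an object of `C i₀` to the product category by initial objects. -/
noncomputable def extObj (i₀ : I) (Y : C i₀) : ∀ j, C j :=
  fun j => if h : j = i₀ then cast (congrArg C h).symm Y else ⊥_ (C j)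

lemma extObj_self (i₀ : I) (Y : C i₀) : extObj (C := C) i₀ Y i₀ = Y := by
  simp [extObj]

lemma extObj_ne {i₀ j : I} (h : j ≠ i₀) (Y : C i₀) : extObj (C := C) i₀ Y j = ⊥_ (C j) := by
  simp [extObj, h]

noncomputable def extObjNeIsInitial {i₀ j : I} (h : j ≠ i₀) (Y : C i₀) :
    IsInitial (extObj (C := C) i₀ Y j) :=
  initialIsInitial.ofIso (eqToIso (extObj_ne h Y)).symm

/-- Extend a morphism `Y ⟶ W i₀` to a morphism `extObj i₀ Y ⟶ W`. -/
noncomputable def extHom (i₀ : I) {Y : C i₀} {W : ∀ j, C j} (f : Y ⟶ W i₀) :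
    extObj i₀ Y ⟶ W :=
  fun j =>
    if h : j = i₀ then (by subst h; exact eqToHom (extObj_self j Y) ≫ f)
    else eqToHom (extObj_ne h Y) ≫ initial.to (W j)

lemma extHom_self (i₀ : I) {Y : C i₀} {W : ∀ j, C j} (f : Y ⟶ W i₀) :
    extHom i₀ f i₀ = eqToHom (extObj_self i₀ Y) ≫ f := by
  simp [extHom]

end Ext

/-- **Connected objects of a finite product of Galois categories.**
Let `I` be a finite index type, `Cᵢ` a Galois category for each `i ∈ I`, and
`C = ∏ᵢ Cᵢ` the product category.  An object `X = (Xᵢ)ᵢ` of `C` is connected if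
and only if there is exactly one index `i₀` with `X i₀` not initial, and
moreover `X i₀` is a connected object of `C i₀`. -/
theorem isConnectedObj_pi_iff
    {I : Type} [Finite I] (C : I → Type*) [∀ i, Category (C i)]
    [∀ i, GaloisCategory (C i)] (X : ∀ i, C i) :
    IsConnectedObj X ↔
      ∃ i₀ : I, IsConnectedObj (X i₀) ∧ ∀ i : I, i ≠ i₀ → Nonempty (IsInitial (X i)) := by
  classical
  constructor
  · rintro ⟨hni, hsplit⟩
    have h1 : ¬ ∀ i, Nonempty (IsInitial (X i)) :=
      fun h => hni ⟨piIsInitial fun i => (h i).some⟩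
    push_neg at h1
    obtain ⟨i₀, hi₀⟩ := h1
    have huniq : ∀ i, i ≠ i₀ → Nonempty (IsInitial (X i)) := by
      intro i₁ hne
      by_contra hi₁
      let Z₁ : ∀ j, C j := fun j => if j = i₀ then X j else ⊥_ (C j)
      let Z₂ : ∀ j, C j := fun j => if j = i₀ then ⊥_ (C j) else X j
      let f : Z₁ ⟶ X := fun j =>
        if h : j = i₀ then eqToHom (if_pos h) else eqToHom (if_neg h) ≫ initial.to (X j)
      let g : Z₂ ⟶ X := fun j =>
        if h : j = i₀ then eqToHom (if_pos h) ≫ initial.to (X j) else eqToHom (if_neg h)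
      have hcol : IsColimit (BinaryCofan.mk f g) := by
        refine piBinaryCofanIsColimit f g fun j => ?_
        by_cases h : j = i₀
        · have hf : f j = eqToHom (if_pos h) := dif_pos h
          have : IsIso (f j) := by rw [hf]; infer_instance
          exact cofanInitialRight (f j)
            (initialIsInitial.ofIso (eqToIso (if_pos h : Z₂ j = ⊥_ (C j))).symm) (g j)
        · have hg : g j = eqToHom (if_neg h) := dif_neg h
          have : IsIso (g j) := by rw [hg]; infer_instance
          exact cofanInitialLeft
            (initialIsInitial.ofIso (eqToIso (if_neg h : Z₁ j = ⊥_ (C j))).symm) (f j) (g j)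
      have hZ₁i₀ : Z₁ i₀ = X i₀ := if_pos rfl
      have hZ₂i₁ : Z₂ i₁ = X i₁ := if_neg hne
      rcases hsplit Z₁ Z₂ (BinaryCofan.mk f g) ⟨hcol⟩ ⟨Iso.refl X⟩ with ⟨hZ⟩ | ⟨hZ⟩
      · exact hi₀.elim ((evalIsInitial hZ.some i₀).ofIso (eqToIso hZ₁i₀))
      · exact hi₁ ⟨(evalIsInitial hZ.some i₁).ofIso (eqToIso hZ₂i₁)⟩
    refine ⟨i₀, ⟨not_nonempty_iff.mpr hi₀, ?_⟩, huniq⟩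
    rintro Y₁ Y₂ c ⟨hc⟩ ⟨e⟩
    have hcol : IsColimit (BinaryCofan.mk
        (extHom i₀ (c.inl ≫ e.hom)) (extHom i₀ (c.inr ≫ e.hom))) := by
      refine piBinaryCofanIsColimit _ _ fun j => ?_
      by_cases h : j = i₀
      · subst h
        rw [extHom_self, extHom_self]
        exact isColimitBinaryCofanOfIsos (isColimitMkOfIsColimit c hc)
          (eqToIso (extObj_self j Y₁)) (eqToIso (extObj_self j Y₂)) e
      · exact cofanAllInitial (extObjNeIsInitial h Y₁) (extObjNeIsInitial h Y₂)
          ((huniq j h).some) _ _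
    rcases hsplit (extObj i₀ Y₁) (extObj i₀ Y₂) (BinaryCofan.mk (extHom i₀ (c.inl ≫ e.hom)) (extHom i₀ (c.inr ≫ e.hom))) ⟨hcol⟩ ⟨Iso.refl X⟩ with ⟨hZ⟩ | ⟨hZ⟩
    · exact Or.inl ⟨(evalIsInitial hZ.some i₀).ofIso (eqToIso (extObj_self i₀ Y₁))⟩
    · exact Or.inr ⟨(evalIsInitial hZ.some i₀).ofIso (eqToIso (extObj_self i₀ Y₂))⟩
  · rintro ⟨i₀, ⟨hni₀, hconn⟩, hinit⟩
    constructor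
    · rintro ⟨hX⟩
      exact hni₀ ⟨evalIsInitial hX i₀⟩
    · rintro Y₁ Y₂ c ⟨hc⟩ ⟨e⟩
      have hci : ∀ i, IsColimit (BinaryCofan.mk (c.inl i) (c.inr i)) :=
        evalBinaryCofanIsColimit c hc
      have hother : ∀ i, i ≠ i₀ →
          Nonempty (IsInitial (Y₁ i)) ∧ Nonempty (IsInitial (Y₂ i)) := by
        intro i hne
        have hpt : IsInitial (c.pt i) := ((hinit i hne).some).ofIso (piIsoApp e i).symm
        exact ⟨nonempty_isInitial_of_hom hpt (c.inl i),
          nonempty_isInitial_of_hom hpt (c.inr i)⟩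
      rcases hconn (Y₁ i₀) (Y₂ i₀) (BinaryCofan.mk (c.inl i₀) (c.inr i₀))
          ⟨hci i₀⟩ ⟨piIsoApp e i₀⟩ with h₀ | h₀
      · refine Or.inl ⟨piIsInitial fun i => ?_⟩
        by_cases h : i = i₀
        · subst h; exact h₀.some
        · exact (hother i h).1.some
      · refine Or.inr ⟨piIsInitial fun i => ?_⟩
        by_cases h : i = i₀
        · subst h; exact h₀.some
        · exact (hother i h).2.some
end

section
/- Let I be a finite index type and for each i ∈ I let C_i be a Galois category; let C = ∏_{i ∈ I} C_i be the product category. Then every object X of C that is not initial is isomorphic to a finite coproduct ∐_{j=1}^{s} X_j of connected objects of C, and this decomposition is unique up to permutation and isomorphism of the factors: if (X_j)_{j ∈ J} and (Y_l)_{l ∈ L} are two finite families of connected objects of C with ∐_{j ∈ J} X_j ≅ ∐_{l ∈ L} Y_l, then there exists a bijection e : J ≃ L such that X_j ≅ Y_{e(j)} for every j ∈ J. -/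
open CategoryTheory CategoryTheory.Limits

open CategoryTheory.PreGaloisCategory

namespace PGAux

universe w v u

variable {C : Type u} [Category.{v} C] [GaloisCategory C]

/-- index-discrimination: equal images in the fiber under cofan injections force
equal indices. -/
lemma inj_index_eq {J : Type} [Finite J] {f : J → C} (c : Cofan f) (hc : IsColimit c)
    (F : C ⥤ FintypeCat.{v}) [FiberFunctor F] {j j' : J}
    (a : F.obj (f j)) (a' : F.obj (f j'))
    (h : F.map (c.inj j) a = F.map (c.inj j') a') : j = j' := by
  cases nonempty_fintype J
  let s : Cocone (Discrete.functor f ⋙ F) :=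
    { pt := FintypeCat.of (ULift J)
      ι := Discrete.natTrans (fun ⟨k⟩ => (FintypeCat.homMk (fun _ => ULift.up k) : F.obj (f k) ⟶ FintypeCat.of (ULift J))) }
  let hFc : IsColimit (F.mapCocone c) := isColimitOfPreserves F hc
  have h1 := ConcreteCategory.congr_hom (hFc.fac s ⟨j⟩) a
  have h2 := ConcreteCategory.congr_hom (hFc.fac s ⟨j'⟩) a'
  dsimp at h1 h2
  have : (hFc.desc s) (F.map (c.inj j) a) = (hFc.desc s) (F.map (c.inj j') a') := by rw [h]
  rw [show (hFc.desc s) (F.map (c.inj j) a) = ULift.up j from h1,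
    show (hFc.desc s) (F.map (c.inj j') a') = ULift.up j' from h2] at this
  exact congrArg ULift.down this

/-- A morphism from a connected object into a (finite) coproduct factors through
one of the injections. -/
lemma factor_through_inj {J : Type} [Finite J] {f : J → C} (c : Cofan f) (hc : IsColimit c)
    (A : C) [IsConnected A] (u : A ⟶ c.pt) :
    ∃ (j : J) (v : A ⟶ f j), v ≫ c.inj j = u := by
  cases nonempty_fintype J
  let F := GaloisCategory.getFiberFunctor C
  obtain ⟨a⟩ : Nonempty (F.obj A) := inferInstance
  let hFc : IsColimit (F.mapCocone c) := isColimitOfPreserves F hc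
  obtain ⟨⟨j⟩, z, hz⟩ := Concrete.isColimit_exists_rep _ hFc (F.map u a)
  refine ⟨j, ?_⟩
  have hmono : Mono (c.inj j) := MonoCoprod.mono_inj f c hc j
  have hz' : F.map u a = F.map (c.inj j) z := hz.symm
  let y : F.obj (pullback u (c.inj j)) := (fiberPullbackEquiv F u (c.inj j)).symm ⟨(a, z), hz'⟩
  have hP : IsInitial (pullback u (c.inj j)) → False := not_initial_of_inhabited F y
  have : IsIso (pullback.fst u (c.inj j)) :=
    IsConnected.noTrivialComponent _ (pullback.fst u (c.inj j)) hP
  refine ⟨inv (pullback.fst u (c.inj j)) ≫ pullback.snd u (c.inj j), ?_⟩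
  rw [Category.assoc, ← pullback.condition, ← Category.assoc, IsIso.inv_hom_id, Category.id_comp]

end PGAux

namespace PGAux2
open PGAux
variable {C : Type u} [Category.{v} C] [GaloisCategory C]
universe w' v' u'

/-- If the target of a morphism is initial, so is its source. -/
lemma initial_of_hom_to_initial {X Z : C} (φ : X ⟶ Z) (hZ : IsInitial Z) :
    Nonempty (IsInitial X) := by
  let F := GaloisCategory.getFiberFunctor C
  have hZ' : IsEmpty (F.obj Z) := (initial_iff_fiber_empty F Z).mp ⟨hZ⟩
  refine (initial_iff_fiber_empty F X).mpr ⟨fun x => hZ'.false (F.map φ x)⟩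

/-- In a cofan with connected colimit, two distinct summands cannot both be
non-initial. -/
lemma initial_or_initial_of_connected_pt {J : Type} [Finite J] {f : J → C}
    (c : Cofan f) (hc : IsColimit c) (A : C) [IsConnected A] (e : c.pt ≅ A)
    {j j' : J} (hne : j ≠ j') :
    Nonempty (IsInitial (f j)) ∨ Nonempty (IsInitial (f j')) := by
  by_contra hcon
  push_neg at hcon
  obtain ⟨h1, h2⟩ := hcon
  let F := GaloisCategory.getFiberFunctor C
  have hm : ∀ k : J, Mono (c.inj k) := fun k => MonoCoprod.mono_inj f c hc k
  have hiso : ∀ k : J, (IsInitial (f k) → False) → IsIso (c.inj k) := by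
    intro k hk
    have : Mono (c.inj k ≫ e.hom) := by
      have := hm k
      infer_instance
    have : IsIso (c.inj k ≫ e.hom) :=
      IsConnected.noTrivialComponent _ (c.inj k ≫ e.hom) hk
    have : IsIso ((c.inj k ≫ e.hom) ≫ e.inv) := inferInstance
    simpa using this
  have hisoj : IsIso (c.inj j) := hiso j (fun hin => h1.false hin)
  obtain ⟨b⟩ : Nonempty (F.obj (f j')) := by
    rw [← not_initial_iff_fiber_nonempty F (f j')]
    exact fun hin => h2.false hin
  have ha : F.map (c.inj j) (F.map (inv (c.inj j)) (F.map (c.inj j') b)) =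
      F.map (c.inj j') b := by
    show (F.map (inv (c.inj j)) ≫ F.map (c.inj j)) (F.map (c.inj j') b) = _
    rw [← F.map_comp, IsIso.inv_hom_id, F.map_id]
    rfl
  exact hne (inj_index_eq c hc F _ b ha)

/-- Restriction of a colimit cofan to the non-initial summands is a colimit. -/
def isColimitRestrict {J : Type} {f : J → C} (c : Cofan f) (hc : IsColimit c)
    (p : J → Prop) [DecidablePred p] (hinit : ∀ j, ¬ p j → IsInitial (f j)) :
    IsColimit (Cofan.mk c.pt (fun j : Subtype p => c.inj j.1)) := by
  refine mkCofanColimit _ (fun t => hc.desc (Cofan.mk t.pt (fun j =>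
      if h : p j then t.inj ⟨j, h⟩ else (hinit j h).to t.pt))) ?_ ?_
  · intro t j
    have := hc.fac (Cofan.mk t.pt (fun j => if h : p j then t.inj ⟨j, h⟩
      else (hinit j h).to t.pt)) ⟨j.1⟩
    dsimp at this ⊢
    rw [show (c.inj j.1) = c.ι.app ⟨j.1⟩ from rfl, this, dif_pos j.2]
  · intro t m hm
    refine hc.uniq (Cofan.mk t.pt (fun j => if h : p j then t.inj ⟨j, h⟩
      else (hinit j h).to t.pt)) m ?_
    rintro ⟨j⟩
    by_cases h : p j
    · dsimp; rw [dif_pos h]; exact hm ⟨j, h⟩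
    · dsimp; rw [dif_neg h]; exact (hinit j h).hom_ext _ _

end PGAux2

namespace PGAux3
open PGAux PGAux2
variable {C : Type u} [Category.{v} C] [GaloisCategory C]

lemma isConnected_of_isConnectedObj {A : C} (h : IsConnectedObj A) : IsConnected A := by
  refine ⟨fun hin => h.1 ⟨hin⟩, fun Y ι _ hY => ?_⟩
  obtain ⟨Z, u, ⟨hcol⟩⟩ := PreGaloisCategory.monoInducesIsoOnDirectSummand ι
  have := h.2 Y Z (BinaryCofan.mk ι u) ⟨hcol⟩ ⟨Iso.refl A⟩
  rcases this with hY' | hZ'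
  · exact (hY'.elim hY).elim
  · obtain ⟨hZ⟩ := hZ'
    have := (BinaryCofan.isColimit_iff_isIso_inl hZ (BinaryCofan.mk ι u)).mp ⟨hcol⟩
    exact this

/-- A colimit binary cofan with connected cocone point has an initial summand. -/
lemma binary_initial_or {Y₁ Y₂ : C} (c : BinaryCofan Y₁ Y₂) (hc : IsColimit c)
    (A : C) [IsConnected A] (e : c.pt ≅ A) :
    Nonempty (IsInitial Y₁) ∨ Nonempty (IsInitial Y₂) := by
  by_contra hcon
  push_neg at hcon
  obtain ⟨h1, h2⟩ := hcon
  let F := GaloisCategory.getFiberFunctor C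
  have hm : Mono c.inl := MonoCoprod.binaryCofan_inl c hc
  have : Mono (c.inl ≫ e.hom) := inferInstance
  have : IsIso (c.inl ≫ e.hom) :=
    IsConnected.noTrivialComponent _ (c.inl ≫ e.hom) (fun hin => h1.false hin)
  have hisol : IsIso c.inl := by
    have : IsIso ((c.inl ≫ e.hom) ≫ e.inv) := inferInstance
    exact IsIso.of_isIso_comp_right c.inl e.hom
  obtain ⟨b⟩ : Nonempty (F.obj Y₂) := by
    rw [← not_initial_iff_fiber_nonempty F Y₂]
    exact fun hin => h2.false hin
  have ha : F.map c.inl (F.map (inv c.inl) (F.map c.inr b)) = F.map c.inr b := by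
    show (F.map (inv c.inl) ≫ F.map c.inl) (F.map c.inr b) = _
    rw [← F.map_comp, IsIso.inv_hom_id, F.map_id]
    rfl
  let s : Cocone (pair Y₁ Y₂ ⋙ F) :=
    { pt := FintypeCat.of (ULift Bool)
      ι := Discrete.natTrans (fun j => match j with
        | ⟨WalkingPair.left⟩ => FintypeCat.homMk (fun _ => ULift.up false)
        | ⟨WalkingPair.right⟩ => FintypeCat.homMk (fun _ => ULift.up true)) }
  let hFc : IsColimit (F.mapCocone c) := isColimitOfPreserves F hc
  have hl := ConcreteCategory.congr_hom (hFc.fac s ⟨WalkingPair.left⟩) (F.map (inv c.inl) (F.map c.inr b))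
  have hr := ConcreteCategory.congr_hom (hFc.fac s ⟨WalkingPair.right⟩) b
  dsimp at hl hr
  have hl' : hFc.desc s (F.map c.inr b) = ULift.up false := by rw [← ha]; exact hl
  have hr' : hFc.desc s (F.map c.inr b) = ULift.up true := hr
  exact Bool.false_ne_true (congrArg ULift.down (hl'.symm.trans hr'))

lemma isConnectedObj_of_isConnected {A : C} (h : IsConnected A) : IsConnectedObj A := by
  constructor
  · rintro ⟨hin⟩
    exact IsConnected.notInitial hin
  · intro Y₁ Y₂ c ⟨hc⟩ ⟨e⟩
    exact binary_initial_or c hc A e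

/-- Uniqueness of the decomposition into connected objects in a Galois category. -/
lemma unique_decomp {J L : Type} [Finite J] [Finite L]
    (f : J → C) (g : L → C) (cf : Cofan f) (cg : Cofan g)
    (hf : ∀ j, IsConnected (f j)) (hg : ∀ l, IsConnected (g l))
    (hcf : IsColimit cf) (hcg : IsColimit cg) (e : cf.pt ≅ cg.pt) :
    ∃ σ : J ≃ L, ∀ j, Nonempty (f j ≅ g (σ j)) := by
  have hfac1 : ∀ j : J, ∃ (l : L) (v : f j ⟶ g l), v ≫ cg.inj l = cf.inj j ≫ e.hom := by
    intro j
    have := hf j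
    exact factor_through_inj cg hcg (f j) (cf.inj j ≫ e.hom)
  have hfac2 : ∀ l : L, ∃ (j : J) (w : g l ⟶ f j), w ≫ cf.inj j = cg.inj l ≫ e.inv := by
    intro l
    have := hg l
    exact factor_through_inj cf hcf (g l) (cg.inj l ≫ e.inv)
  choose σ v hv using hfac1
  choose τ w hw using hfac2
  let F := GaloisCategory.getFiberFunctor C
  have key1 : ∀ j, τ (σ j) = j := by
    intro j
    have := hf j
    obtain ⟨a⟩ : Nonempty (F.obj (f j)) := inferInstance
    have hcomp : (v j ≫ w (σ j)) ≫ cf.inj (τ (σ j)) = cf.inj j := by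
      rw [Category.assoc, hw (σ j), ← Category.assoc, hv j, Category.assoc,
        e.hom_inv_id, Category.comp_id]
    refine inj_index_eq cf hcf F (F.map (v j ≫ w (σ j)) a) a ?_
    show (F.map _ ≫ F.map _) a = _
    rw [← F.map_comp, hcomp]
  have key2 : ∀ l, σ (τ l) = l := by
    intro l
    have := hg l
    obtain ⟨b⟩ : Nonempty (F.obj (g l)) := inferInstance
    have hcomp : (w l ≫ v (τ l)) ≫ cg.inj (σ (τ l)) = cg.inj l := by
      rw [Category.assoc, hv (τ l), ← Category.assoc, hw l, Category.assoc,
        e.inv_hom_id, Category.comp_id]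
    refine inj_index_eq cg hcg F (F.map (w l ≫ v (τ l)) b) b ?_
    show (F.map _ ≫ F.map _) b = _
    rw [← F.map_comp, hcomp]
  refine ⟨⟨σ, τ, key1, key2⟩, fun j => ?_⟩
  have := hf j
  have := hg (σ j)
  obtain ⟨a⟩ : Nonempty (F.obj (f j)) := inferInstance
  have hm1 : Mono (cf.inj j ≫ e.hom) := by
    have := MonoCoprod.mono_inj f cf hcf j
    infer_instance
  have hm2 : Mono (cg.inj (σ j)) := MonoCoprod.mono_inj g cg hcg (σ j)
  have hfib : F.map (cf.inj j ≫ e.hom) a = F.map (cg.inj (σ j)) (F.map (v j) a) := by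
    show _ = (F.map (v j) ≫ F.map (cg.inj (σ j))) a
    rw [← F.map_comp, hv j]
  obtain ⟨iso, -⟩ := connected_component_unique F a (F.map (v j) a)
    (cf.inj j ≫ e.hom) (cg.inj (σ j)) hfib
  exact ⟨iso⟩

end PGAux3

namespace PiAux
open PGAux PGAux2 PGAux3

variable {I : Type} {C : I → Type u} [∀ i, Category.{v} (C i)] [∀ i, GaloisCategory (C i)]

/-- Componentwise colimit cofans assemble to a colimit cofan in the product category. -/
def isColimitCofanPi {J : Type} (f : J → ∀ i, C i) (pt : ∀ i, C i)
    (inj : ∀ j, f j ⟶ pt)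
    (h : ∀ i, IsColimit (Cofan.mk (pt i) (fun j => inj j i))) :
    IsColimit (Cofan.mk pt inj) := by
  refine mkCofanColimit _
    (fun t => fun i => (h i).desc (Cofan.mk (t.pt i) (fun j => t.inj j i))) ?_ ?_
  · intro t j
    funext i
    exact (h i).fac (Cofan.mk (t.pt i) (fun j => t.inj j i)) ⟨j⟩
  · intro t m hm
    funext i
    refine (h i).uniq (Cofan.mk (t.pt i) (fun j => t.inj j i)) (m i) ?_
    rintro ⟨j⟩
    exact congrFun (hm j) i

/-- Evaluation of a colimit cofan at a component is a colimit cofan. -/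
noncomputable def isColimitCofanEval {J : Type} [Finite J] {f : J → ∀ i, C i}
    (c : Cofan f) (hc : IsColimit c) (i : I) :
    IsColimit (Cofan.mk (c.pt i) (fun j => c.inj j i)) := by
  have hco : ∀ i', HasColimitsOfShape (Discrete J) (C i') := fun i' => inferInstance
  let c' : Cofan f := Cofan.mk (fun i' => ∐ (fun j => f j i'))
    (fun j => fun i' => Sigma.ι (fun j' => f j' i') j)
  have hc' : IsColimit c' := isColimitCofanPi f _ _
    (fun i' => coproductIsCoproduct (fun j => f j i'))
  let e := IsColimit.coconePointUniqueUpToIso hc hc'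
  have comm : ∀ j : J, c.inj j ≫ e.hom = c'.inj j :=
    fun j => IsColimit.comp_coconePointUniqueUpToIso_hom hc hc' ⟨j⟩
  refine IsColimit.ofIsoColimit (coproductIsCoproduct (fun j => f j i)) ?_
  refine (Cocones.ext ((Pi.eval C i).mapIso e) ?_).symm
  rintro ⟨j⟩
  exact congrFun (comm j) i

/-- Componentwise colimit binary cofans assemble. -/
def isColimitBinaryCofanPi {Y₁ Y₂ pt : ∀ i, C i} (inl : Y₁ ⟶ pt) (inr : Y₂ ⟶ pt)
    (h : ∀ i, IsColimit (BinaryCofan.mk (inl i) (inr i))) :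
    IsColimit (BinaryCofan.mk inl inr) := by
  refine BinaryCofan.isColimitMk
    (fun s => fun i => (h i).desc (BinaryCofan.mk (s.inl i) (s.inr i))) ?_ ?_ ?_
  · intro s
    funext i
    exact (h i).fac (BinaryCofan.mk (s.inl i) (s.inr i)) ⟨WalkingPair.left⟩
  · intro s
    funext i
    exact (h i).fac (BinaryCofan.mk (s.inl i) (s.inr i)) ⟨WalkingPair.right⟩
  · intro s m h1 h2
    funext i
    refine (h i).uniq (BinaryCofan.mk (s.inl i) (s.inr i)) (m i) ?_
    rintro ⟨(_|_)⟩
    · exact congrFun h1 i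
    · exact congrFun h2 i

/-- Evaluation of a colimit binary cofan at a component. -/
noncomputable def isColimitBinaryCofanEval {Y₁ Y₂ : ∀ i, C i} (c : BinaryCofan Y₁ Y₂)
    (hc : IsColimit c) (i : I) :
    IsColimit (BinaryCofan.mk (c.inl i) (c.inr i)) := by
  have hco : ∀ i', HasBinaryCoproducts (C i') := fun i' => inferInstance
  let c' : BinaryCofan Y₁ Y₂ := BinaryCofan.mk
    (fun i' => (coprod.inl : Y₁ i' ⟶ Y₁ i' ⨿ Y₂ i')) (fun i' => (coprod.inr : Y₂ i' ⟶ Y₁ i' ⨿ Y₂ i'))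
  have hc' : IsColimit c' := isColimitBinaryCofanPi _ _
    (fun i' => coprodIsCoprod (Y₁ i') (Y₂ i'))
  let e := IsColimit.coconePointUniqueUpToIso hc hc'
  have comml : c.inl ≫ e.hom = c'.inl :=
    IsColimit.comp_coconePointUniqueUpToIso_hom hc hc' ⟨WalkingPair.left⟩
  have commr : c.inr ≫ e.hom = c'.inr :=
    IsColimit.comp_coconePointUniqueUpToIso_hom hc hc' ⟨WalkingPair.right⟩
  refine IsColimit.ofIsoColimit (coprodIsCoprod (Y₁ i) (Y₂ i)) ?_
  refine (Cocones.ext ((Pi.eval C i).mapIso e) ?_).symm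
  rintro ⟨(_|_)⟩
  · exact congrFun comml i
  · exact congrFun commr i

/-- Componentwise initial objects assemble to an initial object. -/
def isInitialPi {X : ∀ i, C i} (h : ∀ i, IsInitial (X i)) : IsInitial X :=
  IsInitial.ofUniqueHom (fun Y => fun i => (h i).to (Y i))
    (fun Y m => funext fun i => (h i).hom_ext _ _)

lemma isInitial_eval {X : ∀ i, C i} (h : IsInitial X) (i : I) :
    Nonempty (IsInitial (X i)) := by
  have hbot : ∀ i', HasInitial (C i') := fun i' => inferInstance
  let e := h.uniqueUpToIso (isInitialPi (fun i' => (initialIsInitial : IsInitial (⊥_ (C i')))))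
  exact ⟨IsInitial.ofIso initialIsInitial ((Pi.eval C i).mapIso e).symm⟩

end PiAux

namespace PiChar
open PGAux PGAux2 PGAux3 PiAux

variable {I : Type} {C : I → Type u} [∀ i, Category.{v} (C i)] [∀ i, GaloisCategory (C i)]

lemma isConnectedObj_pi_of {X : ∀ i, C i} (i₀ : I) (h0 : IsConnected (X i₀))
    (hrest : ∀ i, i ≠ i₀ → Nonempty (IsInitial (X i))) : IsConnectedObj X := by
  constructor
  · rintro ⟨hin⟩
    obtain ⟨hi⟩ := isInitial_eval hin i₀
    exact h0.notInitial hi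
  · intro Y₁ Y₂ c hcne ene
    obtain ⟨hc⟩ := hcne
    obtain ⟨e⟩ := ene
    have hcomp : ∀ i, IsColimit (BinaryCofan.mk (c.inl i) (c.inr i)) :=
      isColimitBinaryCofanEval c hc
    have h₀ := binary_initial_or (BinaryCofan.mk (c.inl i₀) (c.inr i₀)) (hcomp i₀)
      (X i₀) ((Pi.eval C i₀).mapIso e)
    have hrest' : ∀ i, i ≠ i₀ →
        Nonempty (IsInitial (Y₁ i)) ∧ Nonempty (IsInitial (Y₂ i)) := by
      intro i hi
      obtain ⟨hXi⟩ := hrest i hi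
      have hpt : IsInitial (c.pt i) := IsInitial.ofIso hXi ((Pi.eval C i).mapIso e).symm
      exact ⟨initial_of_hom_to_initial (c.inl i) hpt,
        initial_of_hom_to_initial (c.inr i) hpt⟩
    rcases h₀ with h₁ | h₂
    · left
      refine ⟨isInitialPi (fun i => ?_)⟩
      by_cases hi : i = i₀
      · subst hi; exact Classical.choice h₁
      · exact Classical.choice (hrest' i hi).1
    · right
      refine ⟨isInitialPi (fun i => ?_)⟩
      by_cases hi : i = i₀
      · subst hi; exact Classical.choice h₂
      · exact Classical.choice (hrest' i hi).2
end PiChar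

namespace PiChar2
open PGAux PGAux2 PGAux3 PiAux PiChar

variable {I : Type} {C : I → Type u} [∀ i, Category.{v} (C i)] [∀ i, GaloisCategory (C i)]

lemma supp_of_isConnectedObj {X : ∀ i, C i} (h : IsConnectedObj X) :
    ∃ i₀, IsConnected (X i₀) ∧ ∀ i, i ≠ i₀ → Nonempty (IsInitial (X i)) := by
  classical
  -- some component is not initial
  have hex : ∃ i₀, ¬ Nonempty (IsInitial (X i₀)) := by
    by_contra hall
    push_neg at hall
    exact h.1 ⟨isInitialPi (fun i => Classical.choice (hall i))⟩
  obtain ⟨i₀, hi₀⟩ := hex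
  -- every other component is initial
  have hrest : ∀ i, i ≠ i₀ → Nonempty (IsInitial (X i)) := by
    intro i₁ hne
    by_contra hni
    -- split `X` at the slot `i₁`
    let Y₁ : ∀ i, C i := fun i => if i = i₁ then ⊥_ (C i) else X i
    let Y₂ : ∀ i, C i := fun i => if i = i₁ then X i else ⊥_ (C i)
    let inl : Y₁ ⟶ X := fun i =>
      if h' : i = i₁ then eqToHom (if_pos h') ≫ initial.to (X i)
      else eqToHom (if_neg h')
    let inr : Y₂ ⟶ X := fun i =>
      if h' : i = i₁ then eqToHom (if_pos h')
      else eqToHom (if_neg h') ≫ initial.to (X i)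
    have hcomp : ∀ i, IsColimit (BinaryCofan.mk (inl i) (inr i)) := by
      intro i
      by_cases h' : i = i₁
      · have hini : IsInitial (Y₁ i) := IsInitial.ofIso initialIsInitial (eqToIso (if_pos h')).symm
        have hiso : IsIso (inr i) := by
          have : inr i = eqToHom (if_pos h') := dif_pos h'
          rw [this]; infer_instance
        exact Classical.choice <|
          (BinaryCofan.isColimit_iff_isIso_inr hini (BinaryCofan.mk (inl i) (inr i))).mpr hiso
      · have hini : IsInitial (Y₂ i) := IsInitial.ofIso initialIsInitial (eqToIso (if_neg h')).symm
        have hiso : IsIso (inl i) := by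
          have : inl i = eqToHom (if_neg h') := dif_neg h'
          rw [this]; infer_instance
        exact Classical.choice <|
          (BinaryCofan.isColimit_iff_isIso_inl hini (BinaryCofan.mk (inl i) (inr i))).mpr hiso
    have hbig : IsColimit (BinaryCofan.mk inl inr) := isColimitBinaryCofanPi inl inr hcomp
    rcases h.2 Y₁ Y₂ (BinaryCofan.mk inl inr) ⟨hbig⟩ ⟨Iso.refl X⟩ with h₁ | h₂
    · obtain ⟨hY₁⟩ := h₁
      obtain ⟨hY₁i₀⟩ := isInitial_eval hY₁ i₀
      have : IsInitial (X i₀) := IsInitial.ofIso hY₁i₀ (eqToIso (if_neg (fun hh => hne hh.symm)))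
      exact hi₀ ⟨this⟩
    · obtain ⟨hY₂⟩ := h₂
      obtain ⟨hY₂i₁⟩ := isInitial_eval hY₂ i₁
      have : IsInitial (X i₁) := IsInitial.ofIso hY₂i₁ (eqToIso (if_pos rfl))
      exact hni ⟨this⟩
  -- `X i₀` is a connected object of `C i₀`
  refine ⟨i₀, isConnected_of_isConnectedObj ?_, hrest⟩
  constructor
  · exact hi₀
  · intro Z₁ Z₂ cz hczne ezne
    obtain ⟨hcz⟩ := hczne
    obtain ⟨ez⟩ := ezne
    let Y₁ : ∀ i, C i := Function.update X i₀ Z₁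
    let B : ∀ i, C i := fun i => ⊥_ (C i)
    let Y₂ : ∀ i, C i := Function.update B i₀ Z₂
    let inl : Y₁ ⟶ X := fun i =>
      if h' : i = i₀ then
        (by subst h'; exact eqToHom (Function.update_self i Z₁ X) ≫ cz.inl ≫ ez.hom)
      else eqToHom (Function.update_of_ne h' Z₁ X)
    let inr : Y₂ ⟶ X := fun i =>
      if h' : i = i₀ then
        (by subst h'; exact eqToHom (Function.update_self i Z₂ B) ≫ cz.inr ≫ ez.hom)
      else eqToHom (Function.update_of_ne h' Z₂ B) ≫ initial.to (X i)
    have hcomp : ∀ i, IsColimit (BinaryCofan.mk (inl i) (inr i)) := by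
      intro i
      by_cases h' : i = i₀
      · subst h'
        have e1 : inl i = eqToHom (Function.update_self i Z₁ X) ≫ cz.inl ≫ ez.hom := dif_pos rfl
        have e2 : inr i = eqToHom (Function.update_self i Z₂ B) ≫ cz.inr ≫ ez.hom := dif_pos rfl
        rw [e1, e2]
        have s1 : IsColimit (BinaryCofan.mk (cz.inl ≫ ez.hom) (cz.inr ≫ ez.hom)) := by
          refine IsColimit.ofIsoColimit hcz (Cocones.ext ez ?_)
          rintro ⟨(_|_)⟩ <;> rfl
        haveI hi1 : IsIso (eqToHom (Function.update_self i Z₁ X)) :=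
          ⟨⟨eqToHom (Function.update_self i Z₁ X).symm, by simp, by simp⟩⟩
        haveI hi2 : IsIso (eqToHom (Function.update_self i Z₂ B)) :=
          ⟨⟨eqToHom (Function.update_self i Z₂ B).symm, by simp, by simp⟩⟩
        have s2 := @BinaryCofan.isColimitCompLeftIso _ _ _ _ _
          (BinaryCofan.mk (cz.inl ≫ ez.hom) (cz.inr ≫ ez.hom))
          (eqToHom (Function.update_self i Z₁ X)) hi1 s1
        have s3 := @BinaryCofan.isColimitCompRightIso _ _ _ _ _
          (BinaryCofan.mk (eqToHom (Function.update_self i Z₁ X) ≫ cz.inl ≫ ez.hom)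
            (cz.inr ≫ ez.hom))
          (eqToHom (Function.update_self i Z₂ B)) hi2 s2
        exact s3
      · have hini : IsInitial (Y₂ i) :=
          IsInitial.ofIso initialIsInitial (eqToIso (Function.update_of_ne h' Z₂ B)).symm
        have hiso : IsIso (inl i) := by
          have : inl i = eqToHom (Function.update_of_ne h' Z₁ X) := dif_neg h'
          rw [this]; infer_instance
        exact Classical.choice <|
          (BinaryCofan.isColimit_iff_isIso_inl hini (BinaryCofan.mk (inl i) (inr i))).mpr hiso
    have hbig : IsColimit (BinaryCofan.mk inl inr) := isColimitBinaryCofanPi inl inr hcomp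
    rcases h.2 Y₁ Y₂ (BinaryCofan.mk inl inr) ⟨hbig⟩ ⟨Iso.refl X⟩ with h₁ | h₂
    · obtain ⟨hY₁⟩ := h₁
      obtain ⟨hY₁i₀⟩ := isInitial_eval hY₁ i₀
      exact Or.inl ⟨IsInitial.ofIso hY₁i₀ (eqToIso (Function.update_self i₀ Z₁ X))⟩
    · obtain ⟨hY₂⟩ := h₂
      obtain ⟨hY₂i₀⟩ := isInitial_eval hY₂ i₀
      exact Or.inr ⟨IsInitial.ofIso hY₂i₀ (eqToIso (Function.update_self i₀ Z₂ B))⟩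

end PiChar2

namespace PiMain
open PGAux PGAux2 PGAux3 PiAux PiChar PiChar2

lemma cofan_inj_eq {C : Type u} [Category.{v} C] {α : Type} {f : α → C} (t : Cofan f)
    {a a' : α} (h : a' = a) :
    t.inj a = eqToHom (congrArg f h).symm ≫ t.inj a' := by subst h; simp

/-- Reindexing a colimit cofan along an equivalence. -/
def reindexCofanIsColimit {C : Type u} [Category.{v} C] {α β : Type} (e : β ≃ α)
    (f : α → C) (c : Cofan f) (hc : IsColimit c) :
    IsColimit (Cofan.mk c.pt (fun b => c.inj (e b)) : Cofan (fun b => f (e b))) := by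
  refine mkCofanColimit _ (fun t => hc.desc (Cofan.mk t.pt
    (fun a => eqToHom (congrArg f (e.apply_symm_apply a)).symm ≫ t.inj (e.symm a)))) ?_ ?_
  · intro t b
    have hf := hc.fac (Cofan.mk t.pt
      (fun a => eqToHom (congrArg f (e.apply_symm_apply a)).symm ≫ t.inj (e.symm a))) ⟨e b⟩
    dsimp at hf ⊢
    rw [show c.inj (e b) = c.ι.app ⟨e b⟩ from rfl, hf]
    exact (cofan_inj_eq t (e.symm_apply_apply b)).symm
  · intro t m hm
    refine hc.uniq (Cofan.mk t.pt
      (fun a => eqToHom (congrArg f (e.apply_symm_apply a)).symm ≫ t.inj (e.symm a))) m ?_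
    rintro ⟨a⟩
    have h1 : c.inj a = eqToHom (congrArg f (e.apply_symm_apply a)).symm ≫ c.inj (e (e.symm a)) :=
      cofan_inj_eq c (e.apply_symm_apply a)
    have h2 := hm (e.symm a)
    dsimp at h2 ⊢
    rw [show c.ι.app ⟨a⟩ = c.inj a from rfl, h1, Category.assoc]
    rw [show c.inj (e (e.symm a)) ≫ m = t.inj (e.symm a) from h2]

variable {I : Type} {C : I → Type u} [∀ i, Category.{v} (C i)] [∀ i, GaloisCategory (C i)]

lemma isConnected_of_eq {D : Type u} [Category.{v} D] [GaloisCategory D] {A A' : D}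
    (h : A = A') (hA : PreGaloisCategory.IsConnected A) : PreGaloisCategory.IsConnected A' :=
  h ▸ hA

lemma existence [Finite I] (X : ∀ i, C i) (hX : ¬ Nonempty (IsInitial X)) :
    ∃ (s : ℕ) (f : Fin s → ∀ i, C i) (c : Cofan f),
      (∀ j, IsConnectedObj (f j)) ∧ Nonempty (IsColimit c) ∧ Nonempty (c.pt ≅ X) := by
  classical
  have hdec := fun i => PreGaloisCategory.has_decomp_connected_components (X i)
  choose ι g ginj hcol hconn hfin using hdec
  let B : ∀ i, C i := fun i => ⊥_ (C i)
  let FF : (Σ i, ι i) → ∀ i, C i := fun p => Function.update B p.1 (g p.1 p.2)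
  let inj : ∀ p, FF p ⟶ X := fun p => fun i =>
    if h' : i = p.1 then
      (by subst h'; exact eqToHom (Function.update_self p.1 (g p.1 p.2) B) ≫ ginj p.1 p.2)
    else eqToHom (Function.update_of_ne h' (g p.1 p.2) B) ≫ initial.to (X i)
  have hcomp : ∀ i, IsColimit (Cofan.mk (X i) (fun p => inj p i)) := by
    intro i
    refine mkCofanColimit _ (fun t => (hcol i).desc (Cofan.mk t.pt (fun j : ι i =>
      eqToHom (Function.update_self i (g i j) B).symm ≫ t.inj ⟨i, j⟩))) ?_ ?_
    · rintro t ⟨i', j⟩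
      by_cases h : i = i'
      · subst h
        have e1 : inj ⟨i, j⟩ i = eqToHom (Function.update_self i (g i j) B) ≫ ginj i j :=
          dif_pos rfl
        have hf := (hcol i).fac (Cofan.mk t.pt (fun j : ι i =>
          eqToHom (Function.update_self i (g i j) B).symm ≫ t.inj ⟨i, j⟩)) ⟨j⟩
        dsimp at hf ⊢
        rw [e1, Category.assoc, hf]
        simp
      · have hini : IsInitial (FF ⟨i', j⟩ i) :=
          IsInitial.ofIso initialIsInitial
            (eqToIso (Function.update_of_ne h (g i' j) B)).symm
        exact hini.hom_ext _ _
    · intro t m hm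
      refine (hcol i).uniq (Cofan.mk t.pt (fun j : ι i =>
        eqToHom (Function.update_self i (g i j) B).symm ≫ t.inj ⟨i, j⟩)) m ?_
      rintro ⟨j⟩
      have e1 : inj ⟨i, j⟩ i = eqToHom (Function.update_self i (g i j) B) ≫ ginj i j :=
        dif_pos rfl
      have h2 := hm ⟨i, j⟩
      dsimp at h2 ⊢
      rw [e1, Category.assoc] at h2
      rw [← h2]
      simp
  have hbig : IsColimit (Cofan.mk X inj) := isColimitCofanPi FF X inj hcomp
  haveI : ∀ i, Finite (ι i) := hfin
  obtain ⟨s, ⟨eqv⟩⟩ := Finite.exists_equiv_fin ((i : I) × ι i)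
  refine ⟨s, fun k => FF (eqv.symm k), Cofan.mk X (fun k => inj (eqv.symm k)), ?_, ?_, ⟨Iso.refl X⟩⟩
  · intro k
    refine isConnectedObj_pi_of (eqv.symm k).1 ?_ ?_
    · exact isConnected_of_eq (Function.update_self (eqv.symm k).1 _ B).symm
        (hconn (eqv.symm k).1 (eqv.symm k).2)
    · intro i hi
      exact ⟨IsInitial.ofIso initialIsInitial
        (eqToIso (Function.update_of_ne hi _ B)).symm⟩
  · exact ⟨reindexCofanIsColimit eqv.symm FF (Cofan.mk X inj) hbig⟩

end PiMain

namespace PiUniq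
open PGAux PGAux2 PGAux3 PiAux PiChar PiChar2

variable {I : Type} {C : I → Type u} [∀ i, Category.{v} (C i)] [∀ i, GaloisCategory (C i)]

lemma uniqueness {J L : Type} [Finite J] [Finite L]
    (f : J → ∀ i, C i) (g : L → ∀ i, C i) (cf : Cofan f) (cg : Cofan g)
    (hf : ∀ j, IsConnectedObj (f j)) (hg : ∀ l, IsConnectedObj (g l))
    (hcf : IsColimit cf) (hcg : IsColimit cg) (e : cf.pt ≅ cg.pt) :
    ∃ σ : J ≃ L, ∀ j, Nonempty (f j ≅ g (σ j)) := by
  classical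
  choose supJ hconnJ hinitJ using fun j => supp_of_isConnectedObj (hf j)
  choose supL hconnL hinitL using fun l => supp_of_isConnectedObj (hg l)
  have compJ : ∀ i, IsColimit (Cofan.mk (cf.pt i)
      (fun j : {j // supJ j = i} => cf.inj j.1 i)) := by
    intro i
    refine isColimitRestrict (Cofan.mk (cf.pt i) (fun j => cf.inj j i))
      (isColimitCofanEval cf hcf i) (fun j => supJ j = i) ?_
    intro j hj
    exact Classical.choice (hinitJ j i (fun hh => hj hh.symm))
  have compL : ∀ i, IsColimit (Cofan.mk (cg.pt i)
      (fun l : {l // supL l = i} => cg.inj l.1 i)) := by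
    intro i
    refine isColimitRestrict (Cofan.mk (cg.pt i) (fun l => cg.inj l i))
      (isColimitCofanEval cg hcg i) (fun l => supL l = i) ?_
    intro l hl
    exact Classical.choice (hinitL l i (fun hh => hl hh.symm))
  have huniq : ∀ i, ∃ σi : {j // supJ j = i} ≃ {l // supL l = i},
      ∀ j, Nonempty ((f j.1) i ≅ (g (σi j).1) i) := by
    intro i
    refine PGAux3.unique_decomp (fun j : {j // supJ j = i} => f j.1 i)
      (fun l : {l // supL l = i} => g l.1 i)
      (Cofan.mk (cf.pt i) (fun j => cf.inj j.1 i))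
      (Cofan.mk (cg.pt i) (fun l => cg.inj l.1 i)) ?_ ?_ (compJ i) (compL i)
      ((Pi.eval C i).mapIso e)
    · rintro ⟨j, hj⟩
      exact hj ▸ hconnJ j
    · rintro ⟨l, hl⟩
      exact hl ▸ hconnL l
  choose σi hσi using huniq
  let σ : J ≃ L :=
    ((Equiv.sigmaFiberEquiv supJ).symm.trans (Equiv.sigmaCongrRight σi)).trans
      (Equiv.sigmaFiberEquiv supL)
  refine ⟨σ, fun j => ?_⟩
  have hσj : σ j = (σi (supJ j) ⟨j, rfl⟩).1 := rfl
  have hsupσ : supL (σ j) = supJ j := by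
    rw [hσj]; exact (σi (supJ j) ⟨j, rfl⟩).2
  have hall : ∀ i, Nonempty ((f j) i ≅ (g (σ j)) i) := by
    intro i
    by_cases hi : i = supJ j
    · subst hi
      rw [hσj]
      exact hσi (supJ j) ⟨j, rfl⟩
    · obtain ⟨h1⟩ := hinitJ j i hi
      obtain ⟨h2⟩ := hinitL (σ j) i (by rw [hsupσ]; exact hi)
      exact ⟨h1.uniqueUpToIso h2⟩
  exact ⟨{ hom := fun i => (Classical.choice (hall i)).hom
           inv := fun i => (Classical.choice (hall i)).inv
           hom_inv_id := funext fun i => (Classical.choice (hall i)).hom_inv_id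
           inv_hom_id := funext fun i => (Classical.choice (hall i)).inv_hom_id }⟩

end PiUniq


/-- **Decomposition into connected components in a finite product of Galois
categories.**  Let `I` be a finite index type, `Cᵢ` a Galois category for each
`i ∈ I`, and `C = ∏ᵢ Cᵢ`.  Every non-initial object `X` of `C` is isomorphic to
a finite coproduct of connected objects, and this decomposition is unique up to
permutation and isomorphism of the factors. -/
theorem pi_galois_decomposition_into_connected
    {I : Type} [Finite I] (C : I → Type*) [∀ i, Category (C i)]
    [∀ i, GaloisCategory (C i)] :
    (∀ X : ∀ i, C i, ¬ Nonempty (IsInitial X) →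
        ∃ (s : ℕ) (f : Fin s → ∀ i, C i) (c : Cofan f),
          (∀ j, IsConnectedObj (f j)) ∧ Nonempty (IsColimit c) ∧
            Nonempty (c.pt ≅ X)) ∧
    (∀ (J L : Type) (_ : Finite J) (_ : Finite L)
        (f : J → ∀ i, C i) (g : L → ∀ i, C i) (cf : Cofan f) (cg : Cofan g),
          (∀ j, IsConnectedObj (f j)) → (∀ l, IsConnectedObj (g l)) →
          Nonempty (IsColimit cf) → Nonempty (IsColimit cg) →
          Nonempty (cf.pt ≅ cg.pt) →
          ∃ e : J ≃ L, ∀ j : J, Nonempty (f j ≅ g (e j))) := by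
  constructor
  · intro X hX
    exact PiMain.existence X hX
  · intro J L hJ hL f g cf cg hf hg hcf hcg he
    haveI := hJ
    haveI := hL
    obtain ⟨hcf'⟩ := hcf
    obtain ⟨hcg'⟩ := hcg
    obtain ⟨e⟩ := he
    exact PiUniq.uniqueness f g cf cg hf hg hcf' hcg' e
end
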